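/- arXiv:0906.5345 — 4 statements merged into one kernel-verified Lean document; each statement's English description precedes it below -/
import Mathlib

section
/- Let A and B be groups with A nontrivial and B having at least three elements. Then the free product A ∗ B is an ICC group: for every g ∈ A ∗ B with g ≠ 1, the conjugacy class {h g h⁻¹ : h ∈ A ∗ B} is infinite. -/
open MeasureTheory

/-- A group is ICC if every nonidentity element has an infinite conjugacy class. -/
def IsICCGroup (G : Type*) [Group G] : Prop :=
  ∀ g : G, g ≠ 1 → (Set.range fun h : G => h * g * h⁻¹).Infinite

namespace ICCProofAux

open Monoid Monoid.CoprodI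

/-- Conjugacy classes of `g` and `c * g * c⁻¹` coincide. -/
lemma conj_range_eq {G : Type*} [Group G] (g c : G) :
    (Set.range fun h : G => h * g * h⁻¹) =
      Set.range fun h : G => h * (c * g * c⁻¹) * h⁻¹ := by
  ext w
  constructor
  · rintro ⟨h, rfl⟩; exact ⟨h * c⁻¹, by group⟩
  · rintro ⟨h, rfl⟩; exact ⟨h * c, by group⟩

lemma inv_conj_range {G : Type*} [Group G] (g : G) :
    (Set.range fun h : G => h * g * h⁻¹) =
      (fun w : G => w⁻¹) '' (Set.range fun h : G => h * g⁻¹ * h⁻¹) := by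
  ext w
  constructor
  · rintro ⟨h, rfl⟩; exact ⟨h * g⁻¹ * h⁻¹, ⟨h, rfl⟩, by group⟩
  · rintro ⟨v, ⟨h, rfl⟩, rfl⟩; exact ⟨h, by group⟩

variable {M : Bool → Type*} [∀ b, Group (M b)]

lemma word_prod_injective :
    Function.Injective (Word.prod : Word M → Monoid.CoprodI M) := by
  classical
  exact Monoid.CoprodI.Word.equiv.symm.injective

lemma neword_inv_length : ∀ {i j : Bool} (w : NeWord M i j),
    w.inv.toList.length = w.toList.length := by
  intro i j w
  induction w with
  | singleton => rfl
  | append w1 hne w2 ih1 ih2 =>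
      simp only [NeWord.inv, NeWord.toList, List.length_append, ih1, ih2]
      omega

/-- Alternating powers of a 2-letter word. -/
def tpow {i : Bool} (T : NeWord M i (!i)) (hne : (!i) ≠ i) : ℕ → NeWord M i (!i)
  | 0 => T
  | n + 1 => T.append hne (tpow T hne n)

lemma tpow_length {i : Bool} (T : NeWord M i (!i)) (hne : (!i) ≠ i)
    (hT : T.toList.length = 2) : ∀ n, (tpow T hne n).toList.length = 2 * n + 2 := by
  intro n
  induction n with
  | zero => simpa [tpow] using hT
  | succ n ih =>
      show (T.append hne (tpow T hne n)).toList.length = _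
      simp only [NeWord.toList, List.length_append, hT, ih]
      omega

/-- The pure case: a nonempty reduced word starting and ending with the same index
has infinite conjugacy class. -/
lemma infinite_conj_pure (x : M true) (hx : x ≠ 1) (y : M false) (hy : y ≠ 1)
    {i : Bool} (W : NeWord M i i) :
    (Set.range fun h : Monoid.CoprodI M => h * W.prod * h⁻¹).Infinite := by
  obtain ⟨T, hT⟩ : ∃ T : NeWord M i (!i), T.toList.length = 2 := by
    cases i
    · refine ⟨.append (.singleton y hy) (show (false : Bool) ≠ true by decide)
        (.singleton x hx), ?_⟩
      rfl
    · refine ⟨.append (.singleton x hx) (show (true : Bool) ≠ false by decide)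
        (.singleton y hy), ?_⟩
      rfl
  have hne : (!i) ≠ i := by cases i <;> decide
  set V : ℕ → NeWord M i i :=
    fun n => ((tpow T hne n).append hne W).append hne.symm (tpow T hne n).inv with hV
  have hlen : ∀ n, (V n).toList.length = W.toList.length + 4 * n + 4 := by
    intro n
    show (((tpow T hne n).append hne W).append hne.symm (tpow T hne n).inv).toList.length = _
    simp only [NeWord.toList, List.length_append, tpow_length T hne hT,
      neword_inv_length]
    omega
  apply Set.infinite_of_injective_forall_mem
    (f := fun n : ℕ => (V n).prod)
  · intro n m h
    have hw : (V n).toWord = (V m).toWord := word_prod_injective h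
    have := congrArg (fun w : Word M => w.toList.length) hw
    simp only [NeWord.toWord] at this
    rw [hlen n, hlen m] at this
    omega
  · intro n
    refine ⟨(tpow T hne n).prod, ?_⟩
    show (tpow T hne n).prod * W.prod * (tpow T hne n).prod⁻¹ = (V n).prod
    simp [hV, NeWord.append_prod, NeWord.inv_prod, mul_assoc]

/-- The mixed case: a word starting in `M false` and ending in `M true`. -/
lemma infinite_conj_BA (x : M true) (hx : x ≠ 1) (y z : M false) (hy : y ≠ 1)
    (hz : z ≠ 1) (hyz : y ≠ z) (W : NeWord M false true) :
    (Set.range fun h : Monoid.CoprodI M => h * W.prod * h⁻¹).Infinite := by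
  obtain ⟨u, hu1, hu2⟩ : ∃ u : M false, u ≠ 1 ∧ u ≠ W.head⁻¹ := by
    by_cases h : y = W.head⁻¹
    · exact ⟨z, hz, h ▸ hyz.symm⟩
    · exact ⟨y, hy, h⟩
  have hm : u * W.head ≠ 1 := fun hc => hu2 (eq_inv_of_mul_eq_one_left hc)
  set V : NeWord M false false :=
    (W.mulHead u hm).append (by decide : (true : Bool) ≠ false)
      (NeWord.singleton u⁻¹ (inv_ne_one.mpr hu1)) with hVdef
  have hVprod : V.prod = Monoid.CoprodI.of u * W.prod * (Monoid.CoprodI.of u)⁻¹ := by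
    simp [hVdef, NeWord.append_prod, NeWord.mulHead_prod, mul_assoc]
  rw [conj_range_eq W.prod (Monoid.CoprodI.of u), ← hVprod]
  exact infinite_conj_pure x hx y hy V

/-- ICC for a binary free product presented as `CoprodI` over `Bool`. -/
lemma coprodI_icc (x : M true) (hx : x ≠ 1) (y z : M false) (hy : y ≠ 1)
    (hz : z ≠ 1) (hyz : y ≠ z) : IsICCGroup (Monoid.CoprodI M) := by
  classical
  intro g hg
  let E : Monoid.CoprodI M ≃ Word M := Monoid.CoprodI.Word.equiv
  have hsymm : ∀ w : Word M, E.symm w = w.prod := fun _ => rfl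
  have hGw : (E g).prod = g := by rw [← hsymm]; exact E.symm_apply_apply g
  have hw : E g ≠ Word.empty := fun h => hg (by rw [← hGw, h, Word.prod_empty])
  obtain ⟨i, j, W, hW⟩ := NeWord.of_word (E g) hw
  have hWg : W.prod = g := by
    show W.toWord.prod = g
    rw [hW]
    exact hGw
  cases i <;> cases j
  · rw [← hWg]; exact infinite_conj_pure x hx y hy W
  · -- i = false, j = true
    rw [← hWg]; exact infinite_conj_BA x hx y z hy hz hyz W
  · -- i = true, j = false : use inverses
    have hBA := infinite_conj_BA x hx y z hy hz hyz W.inv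
    rw [NeWord.inv_prod, hWg] at hBA
    rw [inv_conj_range]
    exact hBA.image (inv_injective.injOn)
  · rw [← hWg]; exact infinite_conj_pure x hx y hy W

lemma isICC_of_mulEquiv {G H : Type*} [Group G] [Group H] (e : G ≃* H)
    (hG : IsICCGroup G) : IsICCGroup H := by
  intro g hg
  have h1 : e.symm g ≠ 1 := by
    intro h
    apply hg
    rw [← e.apply_symm_apply g, h, map_one]
  have himg := (hG (e.symm g) h1).image e.injective.injOn
  refine himg.mono ?_
  rintro _ ⟨_, ⟨h, rfl⟩, rfl⟩
  exact ⟨e h, by simp [map_mul, mul_assoc]⟩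

universe u v

instance instGroupCond {A B : Type u} [Group A] [Group B] (b : Bool) :
    Group (cond b A B) := by
  cases b <;> dsimp only [cond] <;> infer_instance

/-- The family for the binary coproduct, lifted to a common universe. -/
abbrev condFam (A : Type u) (B : Type v) : Bool → Type (max u v) :=
  fun b => cond b (ULift.{v} A) (ULift.{u} B)

/-- The binary coproduct is the indexed coproduct over `Bool`. -/
def coprodEquivCoprodI (A : Type u) (B : Type v) [Group A] [Group B] :
    Monoid.Coprod A B ≃* Monoid.CoprodI (condFam A B) :=
  MonoidHom.toMulEquiv
    (Coprod.lift
      ((Monoid.CoprodI.of (M := condFam A B) (i := true)).comp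
        (MulEquiv.ulift.symm : A ≃* ULift.{v} A).toMonoidHom)
      ((Monoid.CoprodI.of (M := condFam A B) (i := false)).comp
        (MulEquiv.ulift.symm : B ≃* ULift.{u} B).toMonoidHom))
    (Monoid.CoprodI.lift (fun b => match b with
      | true => (Coprod.inl : A →* Monoid.Coprod A B).comp
          (MulEquiv.ulift : ULift.{v} A ≃* A).toMonoidHom
      | false => (Coprod.inr : B →* Monoid.Coprod A B).comp
          (MulEquiv.ulift : ULift.{u} B ≃* B).toMonoidHom))
    (by
      apply Coprod.hom_ext
      · apply MonoidHom.ext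
        intro a
        simp only [MonoidHom.comp_apply, MonoidHom.id_apply, Coprod.lift_apply_inl,
          Monoid.CoprodI.lift_of]
        rfl
      · apply MonoidHom.ext
        intro b
        simp only [MonoidHom.comp_apply, MonoidHom.id_apply, Coprod.lift_apply_inr,
          Monoid.CoprodI.lift_of]
        rfl)
    (by
      apply Monoid.CoprodI.ext_hom
      intro i
      cases i
      all_goals
        apply MonoidHom.ext
        intro m
        simp only [MonoidHom.comp_apply, MonoidHom.id_apply, Monoid.CoprodI.lift_of]
        rfl)

end ICCProofAux

/-- If `A` is nontrivial and `B` has at least three elements, then the free product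
`A ∗ B` is an ICC group. -/
theorem freeProd_isICC (A B : Type*) [Group A] [Group B] [Nontrivial A]
    (hB : ∃ x y z : B, x ≠ y ∧ x ≠ z ∧ y ≠ z) :
    IsICCGroup (Monoid.Coprod A B) := by
  obtain ⟨b1, b2, b3, h12, h13, h23⟩ := hB
  obtain ⟨y, z, hy, hz, hyz⟩ : ∃ y z : B, y ≠ 1 ∧ z ≠ 1 ∧ y ≠ z := by
    by_cases h1 : b1 = 1
    · exact ⟨b2, b3, fun h => h12 (h1.trans h.symm), fun h => h13 (h1.trans h.symm), h23⟩
    · by_cases h2 : b2 = 1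
      · exact ⟨b1, b3, h1, fun h => h23 (h2.trans h.symm), h13⟩
      · exact ⟨b1, b2, h1, h2, h12⟩
  obtain ⟨x, hx⟩ := exists_ne (1 : A)
  have hx' : (ULift.up x : ICCProofAux.condFam A B true) ≠ 1 :=
    fun h => hx (congrArg ULift.down h)
  have hy' : (ULift.up y : ICCProofAux.condFam A B false) ≠ 1 :=
    fun h => hy (congrArg ULift.down h)
  have hz' : (ULift.up z : ICCProofAux.condFam A B false) ≠ 1 :=
    fun h => hz (congrArg ULift.down h)
  have hyz' : (ULift.up y : ICCProofAux.condFam A B false) ≠ ULift.up z :=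
    fun h => hyz (congrArg ULift.down h)
  exact ICCProofAux.isICC_of_mulEquiv (ICCProofAux.coprodEquivCoprodI A B).symm
    (ICCProofAux.coprodI_icc (M := ICCProofAux.condFam A B)
      (ULift.up x) hx' (ULift.up y) (ULift.up z) hy' hz' hyz')
end

section
/- For every group G, the group (G × F₂) ∗ ℤ is ICC: for every g ≠ 1 in (G × F₂) ∗ ℤ, the conjugacy class {h g h⁻¹ : h ∈ (G × F₂) ∗ ℤ} is infinite. In particular, the assignment G ↦ (G × F₂) ∗ ℤ produces ICC groups from arbitrary groups. -/
open MeasureTheory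

section ICCAuxSection

open Monoid

namespace ICCAux

variable {ι : Type*} {G : ι → Type*} [∀ i, Group (G i)]

open Monoid.CoprodI

/-- Head decomposition of a nonempty reduced word. -/
lemma neword_pop {i j : ι} (w : CoprodI.NeWord G i j) :
    (∃ _ : i = j, w.prod = CoprodI.of w.head) ∨
      ∃ (k : ι) (_ : i ≠ k) (w' : CoprodI.NeWord G k j),
        w.prod = CoprodI.of w.head * w'.prod := by
  induction w with
  | singleton x hx => exact Or.inl ⟨rfl, by simp⟩
  | @append a b c d w₁ hne w₂ ih₁ ih₂ =>
    rcases ih₁ with ⟨rfl, h⟩ | ⟨k, hk, w', h⟩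
    · exact Or.inr ⟨c, hne, w₂, by simp [h]⟩
    · exact Or.inr ⟨k, hk, NeWord.append w' hne w₂, by simp [h, mul_assoc]⟩

/-- Every element is either in the `i`-th factor, or has the form
`of h * w.prod * of k` with `w` a nonempty reduced word starting and ending
away from `i`. -/
lemma coprodI_decomp (i : ι) (x : CoprodI G) :
    (∃ h : G i, x = CoprodI.of h) ∨
      ∃ (a b : ι) (_ : a ≠ i) (_ : b ≠ i) (w : CoprodI.NeWord G a b) (h k : G i),
        x = CoprodI.of h * w.prod * CoprodI.of k := by
  classical
  induction x using CoprodI.induction_left with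
  | one => exact Or.inl ⟨1, by simp⟩
  | @mul l g x ih =>
    by_cases hg : g = 1
    · simpa [hg] using ih
    rcases ih with ⟨h, rfl⟩ | ⟨a, b, ha, hb, w, h, k, rfl⟩
    · by_cases hl : l = i
      · subst hl
        exact Or.inl ⟨g * h, by simp⟩
      · by_cases hh : h = 1
        · exact Or.inr ⟨l, l, hl, hl, NeWord.singleton g hg, 1, 1, by simp [hh]⟩
        · exact Or.inr ⟨l, l, hl, hl, NeWord.singleton g hg, 1, h, by simp [mul_assoc]⟩
    · by_cases hl : l = i
      · subst hl
        exact Or.inr ⟨a, b, ha, hb, w, g * h, k, by simp [mul_assoc]⟩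
      · by_cases hh : h = 1
        · -- x = of g * w.prod * of k
          by_cases hla : l = a
          · subst hla
            by_cases hmul : g * w.head = 1
            · -- of g * w.prod collapses
              rcases neword_pop w with ⟨rfl, hw⟩ | ⟨c, hc, w', hw⟩
              · refine Or.inl ?_
                refine ⟨k, ?_⟩
                have : CoprodI.of g * w.prod = 1 := by
                  rw [hw, ← MonoidHom.map_mul, hmul, MonoidHom.map_one]
                simp [hh, ← mul_assoc, this]
              · have hx : CoprodI.of g * w.prod = w'.prod := by
                  rw [hw, ← mul_assoc, ← MonoidHom.map_mul, hmul, MonoidHom.map_one, one_mul]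
                by_cases hci : c = i
                · subst hci
                  rcases neword_pop w' with ⟨rfl, hw'⟩ | ⟨d, hd, w'', hw'⟩
                  · exact absurd rfl hb
                  · exact Or.inr ⟨d, b, fun hdi => hd (hdi ▸ rfl), hb, w'', w'.head, k,
                      by rw [hh, map_one, one_mul, ← mul_assoc, hx, hw']⟩
                · exact Or.inr ⟨c, b, hci, hb, w', 1, k, by rw [hh, map_one, one_mul, one_mul, ← mul_assoc, hx]⟩
            · exact Or.inr ⟨l, b, hl, hb, w.mulHead g hmul, 1, k,
                by simp [hh, mul_assoc]⟩
          · exact Or.inr ⟨l, b, hl, hb, NeWord.append (NeWord.singleton g hg) hla w, 1, k,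
              by simp [hh, mul_assoc]⟩
        · exact Or.inr ⟨l, b, hl, hb,
            NeWord.append (NeWord.singleton g hg) hl
              (NeWord.append (NeWord.singleton h hh) (Ne.symm ha) w), 1, k,
            by simp [mul_assoc]⟩


/-- If `x` commutes with a nontrivial element of the `i`-th factor, then `x`
belongs to the `i`-th factor. -/
lemma centralizer_lemma (i : ι) (m : G i) (hm : m ≠ 1) (x : CoprodI G)
    (hcomm : CoprodI.of m * x = x * CoprodI.of m) : ∃ h : G i, x = CoprodI.of h := by
  classical
  rcases coprodI_decomp i x with hx | ⟨a, b, ha, hb, w, h, k, rfl⟩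
  · exact hx
  · exfalso
    set m₂ : G i := k * m * k⁻¹ with hm₂def
    have hm₂ : m₂ ≠ 1 := by
      simp only [hm₂def, ne_eq, mul_inv_eq_one]
      intro hcon
      exact hm (by simpa using mul_left_cancel (a := k) (by rw [hcon, mul_one]))
    set m₃ : G i := h⁻¹ * m * h with hm₃def
    have hm₃ : m₃ ≠ 1 := by
      simp only [hm₃def, ne_eq]
      intro hcon
      apply hm
      have := congrArg (fun z => h * z * h⁻¹) hcon
      simpa [mul_assoc] using this
    set W : CoprodI.NeWord G a a :=
      NeWord.append w hb (NeWord.append (NeWord.singleton m₂ hm₂) (Ne.symm hb) w.inv)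
      with hWdef
    have hWprod : W.prod = w.prod * CoprodI.of m₂ * w.prod⁻¹ := by
      simp [hWdef, mul_assoc]
    have key : CoprodI.of m₃ = W.prod := by
      rw [hWprod]
      have h1 : CoprodI.of m₃ * (w.prod * CoprodI.of k) = w.prod * CoprodI.of k * CoprodI.of m := by
        have := hcomm
        calc CoprodI.of m₃ * (w.prod * CoprodI.of k)
            = (CoprodI.of h)⁻¹ * (CoprodI.of m * (CoprodI.of h * w.prod * CoprodI.of k)) := by
              simp [hm₃def, mul_assoc]
          _ = (CoprodI.of h)⁻¹ * (CoprodI.of h * w.prod * CoprodI.of k * CoprodI.of m) := by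
              rw [hcomm]
          _ = w.prod * CoprodI.of k * CoprodI.of m := by simp [mul_assoc]
      have h2 : CoprodI.of m₃ * w.prod = w.prod * CoprodI.of m₂ := by
        have := congrArg (fun z => z * (CoprodI.of k)⁻¹) h1
        simpa [hm₂def, mul_assoc] using this
      rw [← h2, mul_assoc, mul_inv_cancel, mul_one]
    -- now derive a contradiction from `of m₃ = W.prod` with `W` starting at `a ≠ i`
    have hinj : Function.Injective (Word.prod : Word G → CoprodI G) :=
      Function.LeftInverse.injective (g := Word.equiv) Word.equiv.right_inv
    have hsing : (NeWord.singleton m₃ hm₃).prod = CoprodI.of m₃ := by simp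
    have hWount : (NeWord.singleton m₃ hm₃).toWord = W.toWord := by
      apply hinj
      show (NeWord.singleton m₃ hm₃).prod = W.prod
      rw [hsing, key]
    have hhead : (NeWord.singleton m₃ hm₃).toList.head? = W.toList.head? :=
      congrArg (fun w : Word G => w.toList.head?) hWount
    rw [NeWord.toList_head?, NeWord.toList_head?] at hhead
    have : i = a := congrArg Sigma.fst (Option.some.inj hhead)
    exact ha this.symm


lemma of_ne_of {i j : ι} (hij : i ≠ j) (z : G i) (z' : G j) (hz : z ≠ 1) :
    (CoprodI.of z : CoprodI G) ≠ CoprodI.of z' := by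
  classical
  intro hEq
  by_cases hz' : z' = 1
  · rw [hz', map_one] at hEq
    exact hz (CoprodI.of_injective i (by rw [hEq, map_one]))
  · have hinj : Function.Injective (Word.prod : Word G → CoprodI G) :=
      Function.LeftInverse.injective (g := Word.equiv) Word.equiv.right_inv
    have : (NeWord.singleton z hz).toWord = (NeWord.singleton z' hz').toWord := by
      apply hinj
      show (NeWord.singleton z hz).prod = (NeWord.singleton z' hz').prod
      simpa using hEq
    have hhead : (NeWord.singleton z hz).toList.head? = (NeWord.singleton z' hz').toList.head? :=
      congrArg (fun w : Word G => w.toList.head?) this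
    rw [NeWord.toList_head?, NeWord.toList_head?] at hhead
    exact hij (congrArg Sigma.fst (Option.some.inj hhead))

lemma conj_commute_of_not_injective {K : Type*} [Group K] {T x : K}
    (hni : ¬ Function.Injective (fun n : ℕ => T ^ n * x * (T ^ n)⁻¹)) :
    ∃ c : ℤ, c ≠ 0 ∧ T ^ c * x = x * T ^ c := by
  rw [Function.not_injective_iff] at hni
  obtain ⟨a, b, hab, hne⟩ := hni
  refine ⟨(a : ℤ) - (b : ℤ), sub_ne_zero.mpr (by exact_mod_cast hne), ?_⟩
  have hcomm : Commute (T ^ a) ((T ^ b)⁻¹) := ((Commute.refl T).pow_pow a b).inv_right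
  have hu : T ^ ((a : ℤ) - (b : ℤ)) = T ^ a * (T ^ b)⁻¹ := by
    rw [zpow_sub, zpow_natCast, zpow_natCast]
  have h2 : (T ^ b)⁻¹ * T ^ a * x = x * ((T ^ b)⁻¹ * T ^ a) := by
    calc (T ^ b)⁻¹ * T ^ a * x
        = (T ^ b)⁻¹ * (T ^ a * x * (T ^ a)⁻¹) * T ^ a := by group
      _ = (T ^ b)⁻¹ * (T ^ b * x * (T ^ b)⁻¹) * T ^ a := by rw [hab]
      _ = x * ((T ^ b)⁻¹ * T ^ a) := by group
  rw [hu, hcomm.eq]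
  exact h2

/-- Core lemma: a free product with two factors (indexed by `i ≠ j`) each containing
an element all of whose nonzero integer powers are nontrivial, is ICC. -/
lemma icc_core {i j : ι} (hij : i ≠ j) (t : G i) (s : G j)
    (ht : ∀ n : ℤ, n ≠ 0 → t ^ n ≠ 1) (hs : ∀ n : ℤ, n ≠ 0 → s ^ n ≠ 1)
    (x : CoprodI G) (hx : x ≠ 1) :
    (Set.range fun h : CoprodI G => h * x * h⁻¹).Infinite := by
  by_cases hti : Function.Injective
      (fun n : ℕ => (CoprodI.of t) ^ n * x * ((CoprodI.of t) ^ n)⁻¹)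
  · exact Set.infinite_of_injective_forall_mem hti (fun n => ⟨(CoprodI.of t) ^ n, rfl⟩)
  obtain ⟨c, hc, hcomm⟩ := conj_commute_of_not_injective hti
  rw [← map_zpow] at hcomm
  obtain ⟨z, rfl⟩ := centralizer_lemma i (t ^ c) (ht c hc) x hcomm
  by_cases hsi : Function.Injective
      (fun n : ℕ => (CoprodI.of s) ^ n * CoprodI.of z * ((CoprodI.of s) ^ n)⁻¹)
  · exact Set.infinite_of_injective_forall_mem hsi (fun n => ⟨(CoprodI.of s) ^ n, rfl⟩)
  obtain ⟨c', hc', hcomm'⟩ := conj_commute_of_not_injective hsi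
  rw [← map_zpow] at hcomm'
  obtain ⟨z', hz'⟩ := centralizer_lemma j (s ^ c') (hs c' hc') _ hcomm'
  exfalso
  have hz : z ≠ 1 := fun h => hx (by rw [h, map_one])
  exact of_ne_of hij z z' hz hz'


universe u

section Bridge

variable (A B : Type u) [Group A] [Group B]

/-- The two-element family of groups `A`, `B` indexed by `Bool`. -/
abbrev fam : Bool → Type _ := fun b => cond b A B

instance : ∀ b, Group (fam A B b)
  | false => ‹Group B›
  | true => ‹Group A›

/-- The canonical map from the binary coproduct to the indexed coproduct. -/
def toCoprodI : Coprod A B →* CoprodI (fam A B) :=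
  Coprod.lift (CoprodI.of (M := fam A B) (i := true)) (CoprodI.of (M := fam A B) (i := false))

/-- The canonical map from the indexed coproduct to the binary coproduct. -/
def ofCoprodI : CoprodI (fam A B) →* Coprod A B :=
  CoprodI.lift fun b => match b with
    | true => Coprod.inl
    | false => Coprod.inr

/-- The binary coproduct is isomorphic to the `Bool`-indexed coproduct. -/
def equivCoprodI : Coprod A B ≃* CoprodI (fam A B) :=
  MonoidHom.toMulEquiv (toCoprodI A B) (ofCoprodI A B)
    (by
      refine Coprod.hom_ext ?_ ?_ <;> ext x <;>
        simp only [toCoprodI, ofCoprodI, MonoidHom.comp_apply, MonoidHom.id_apply,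
          Coprod.lift_apply_inl, Coprod.lift_apply_inr] <;>
        exact CoprodI.lift_of _ _)
    (by
      refine CoprodI.ext_hom _ _ fun b => ?_
      cases b <;> ext x <;>
        simp only [toCoprodI, ofCoprodI, MonoidHom.comp_apply, MonoidHom.id_apply] <;>
        rw [CoprodI.lift_of] <;>
        simp [Coprod.lift_apply_inl, Coprod.lift_apply_inr])

end Bridge



end ICCAux

open ICCAux in
theorem ICCAux_main (G : Type u) [Group G] :
    IsICCGroup (Monoid.Coprod (G × FreeGroup (Fin 2)) (Multiplicative ℤ)) := by
  intro g hg
  set A := G × FreeGroup (Fin 2) with hA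
  set B := Multiplicative ℤ with hB
  let A' := ULift.{0} A
  let B' := ULift.{u} B
  let e : Monoid.Coprod A B ≃* Monoid.CoprodI (fam A' B') :=
    (MulEquiv.coprodCongr MulEquiv.ulift.symm MulEquiv.ulift.symm).trans
      (equivCoprodI A' B')
  -- the two elements with all nonzero powers nontrivial
  have hofAdd : ∀ n : ℤ, (Multiplicative.ofAdd (1 : ℤ)) ^ n = Multiplicative.ofAdd n := by
    intro n
    rw [← ofAdd_zsmul]
    simp
  have ht : ∀ n : ℤ, n ≠ 0 → (ULift.up (1, FreeGroup.of 0) : A') ^ n ≠ 1 := by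
    intro n hn hcon
    apply hn
    have h1 : ((1, FreeGroup.of 0) : A) ^ n = 1 := congrArg ULift.down hcon
    have h2 : (FreeGroup.of (0 : Fin 2)) ^ n = 1 := by
      have := congrArg Prod.snd h1
      simpa using this
    have h3 : (FreeGroup.lift fun _ : Fin 2 => Multiplicative.ofAdd (1 : ℤ))
        ((FreeGroup.of (0 : Fin 2)) ^ n) = 1 := by
      rw [h2]
      exact map_one _
    rw [map_zpow, FreeGroup.lift_apply_of, hofAdd] at h3
    simpa using congrArg Multiplicative.toAdd h3
  have hs : ∀ n : ℤ, n ≠ 0 → (ULift.up (Multiplicative.ofAdd (1 : ℤ)) : B') ^ n ≠ 1 := by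
    intro n hn hcon
    apply hn
    have h1 : (Multiplicative.ofAdd (1 : ℤ)) ^ n = 1 := congrArg ULift.down hcon
    rw [hofAdd] at h1
    simpa using congrArg Multiplicative.toAdd h1
  have heg : e g ≠ 1 := fun h => hg (by
    have := congrArg e.symm h
    simpa using this)
  have hinf := icc_core (G := fam A' B') (i := true) (j := false) (by decide)
    (ULift.up (1, FreeGroup.of 0)) (ULift.up (Multiplicative.ofAdd (1 : ℤ))) ht hs (e g) heg
  have himage : (⇑e) '' (Set.range fun h => h * g * h⁻¹) =
      Set.range fun h' : Monoid.CoprodI (fam A' B') => h' * e g * h'⁻¹ := by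
    ext y
    constructor
    · rintro ⟨-, ⟨h, rfl⟩, rfl⟩
      exact ⟨e h, by simp; exact (map_inv e h).symm⟩
    · rintro ⟨h', rfl⟩
      exact ⟨e.symm h' * g * (e.symm h')⁻¹, ⟨e.symm h', rfl⟩, by simp; exact (map_inv e _).trans (by rw [e.apply_symm_apply])⟩
  exact Set.Infinite.of_image _ (himage ▸ hinf)


/-- For every group `G`, the free product `(G × F₂) ∗ ℤ` is an ICC group. -/
theorem prodFreeGroupCoprodInt_isICC (G : Type*) [Group G] :
    IsICCGroup (Monoid.Coprod (G × FreeGroup (Fin 2)) (Multiplicative ℤ)) :=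
  ICCAux_main G

end ICCAuxSection
end

section
/- The groups S∞ (the group of finitary permutations of ℕ) and ℤ are orbit equivalent: there exist a standard Borel probability space (X, μ) and actions of S∞ and of ℤ on X by measure-preserving measurable bijections, each of which is essentially free (for every nonidentity group element g, the set {x ∈ X : g·x = x} is μ-null) and ergodic (every measurable set invariant under the action is μ-null or μ-conull), such that for μ-almost every x ∈ X the S∞-orbit of x equals the ℤ-orbit of x. -/
open MeasureTheory
open scoped ENNReal

/-- The group of finitary permutations of ℕ. -/
def SInf : Subgroup (Equiv.Perm ℕ) where
  carrier := {σ | {n | σ n ≠ n}.Finite}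
  one_mem' := by simp
  mul_mem' := by
    intro σ τ hσ hτ
    refine Set.Finite.subset ((hσ.preimage τ.injective.injOn).union hτ) ?_
    intro n hn
    by_contra h
    simp only [Set.mem_union, Set.mem_preimage, Set.mem_setOf_eq, not_or, not_not] at h
    refine hn ?_
    show σ (τ n) = n
    rw [h.2, ← h.2]
    exact h.1
  inv_mem' := by
    intro σ hσ
    have : {n | σ⁻¹ n ≠ n} = {n | σ n ≠ n} := by
      ext n
      simp only [Set.mem_setOf_eq, ne_eq, Equiv.Perm.inv_eq_iff_eq]
      exact not_iff_not.mpr eq_comm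
    show {n | σ⁻¹ n ≠ n}.Finite
    exact this ▸ hσ

/-- A p.m.p. action: every group element acts as a measure-preserving (measurable) map. -/
def IsPMPAction {G X : Type*} [Group G] [MeasurableSpace X]
    (μ : Measure X) (a : G →* Equiv.Perm X) : Prop :=
  ∀ g : G, MeasurePreserving (a g) μ μ

/-- Essential freeness of an action. -/
def IsFreeAction {G X : Type*} [Group G] [MeasurableSpace X]
    (μ : Measure X) (a : G →* Equiv.Perm X) : Prop :=
  ∀ g : G, g ≠ 1 → μ {x | a g x = x} = 0

/-- Ergodicity of an action. -/
def IsErgodicAction {G X : Type*} [Group G] [MeasurableSpace X]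
    (μ : Measure X) (a : G →* Equiv.Perm X) : Prop :=
  ∀ A : Set X, MeasurableSet A → (∀ g : G, a g ⁻¹' A = A) → μ A = 0 ∨ μ A = 1

/-- The orbit of a point under an action. -/
def orbitOf {G X : Type*} [Group G] (a : G →* Equiv.Perm X) (x : X) : Set X :=
  Set.range fun g => a g x

/-- Two groups are orbit equivalent if they admit free, ergodic, p.m.p. actions on a
common standard Borel probability space whose orbits agree almost everywhere. -/
def AreOrbitEquivalent (G H : Type*) [Group G] [Group H] : Prop :=
  ∃ (X : Type) (mX : MeasurableSpace X) (μ : @Measure X mX),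
    @StandardBorelSpace X mX ∧ @IsProbabilityMeasure X mX μ ∧
    ∃ (a : G →* Equiv.Perm X) (b : H →* Equiv.Perm X),
      IsPMPAction μ a ∧ IsFreeAction μ a ∧ IsErgodicAction μ a ∧
      IsPMPAction μ b ∧ IsFreeAction μ b ∧ IsErgodicAction μ b ∧
      ∀ᵐ x ∂μ, orbitOf a x = orbitOf b x

namespace OE


abbrev XX : Type := ∀ n : ℕ, Fin (n + 2)

def resEq (n : ℕ) (x y : XX) : Prop := ∀ k, k < n → x k = y k

lemma resEq_refl (n : ℕ) (x : XX) : resEq n x x := fun _ _ => rfl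
lemma resEq_symm {n : ℕ} {x y : XX} (h : resEq n x y) : resEq n y x :=
  fun k hk => (h k hk).symm
lemma resEq_trans {n : ℕ} {x y z : XX} (h : resEq n x y) (h' : resEq n y z) : resEq n x z :=
  fun k hk => (h k hk).trans (h' k hk)
lemma resEq_mono {n m : ℕ} {x y : XX} (h : resEq n x y) (hm : m ≤ n) : resEq m x y :=
  fun k hk => h k (lt_of_lt_of_le hk hm)

def tailEq (x y : XX) : Prop := ∃ n, ∀ k, n ≤ k → x k = y k

lemma tailEq_refl (x : XX) : tailEq x x := ⟨0, fun _ _ => rfl⟩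
lemma tailEq_symm {x y : XX} (h : tailEq x y) : tailEq y x :=
  h.imp fun _ hn k hk => (hn k hk).symm
lemma tailEq_trans {x y z : XX} (h : tailEq x y) (h' : tailEq y z) : tailEq x z := by
  obtain ⟨n, hn⟩ := h; obtain ⟨m, hm⟩ := h'
  exact ⟨max n m, fun k hk => (hn k ((le_max_left _ _).trans hk)).trans
    (hm k ((le_max_right _ _).trans hk))⟩

def cyl (n : ℕ) (c : XX) : Set XX := {x | resEq n x c}

lemma mem_cyl {n : ℕ} {c x : XX} : x ∈ cyl n c ↔ resEq n x c := Iff.rfl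

lemma measurableSet_cyl (n : ℕ) (c : XX) : MeasurableSet (cyl n c) := by
  have : cyl n c = ⋂ (k : ℕ) (_ : k < n), (fun x : XX => x k) ⁻¹' {c k} := by
    ext x; simp [cyl, resEq, Set.mem_iInter]
  rw [this]
  exact MeasurableSet.iInter fun k => MeasurableSet.iInter fun _ =>
    (measurable_pi_apply k) (measurableSet_singleton _)

lemma cyl_congr {n : ℕ} {c c' : XX} (h : resEq n c c') : cyl n c = cyl n c' := by
  ext x; exact ⟨fun hx => resEq_trans hx h, fun hx => resEq_trans hx (resEq_symm h)⟩

/-- finite prefixes -/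
abbrev Pre (n : ℕ) := ∀ k : Fin n, Fin ((k : ℕ) + 2)

def res (n : ℕ) (x : XX) : Pre n := fun k => x k

def ext0 (n : ℕ) (p : Pre n) : XX := fun k => if h : k < n then p ⟨k, h⟩ else 0

lemma resEq_ext0 (n : ℕ) (p : Pre n) (x : XX) : resEq n (ext0 n p) (ext0 n (res n x)) ↔ p = res n x := by
  constructor
  · intro h; funext k
    have := h k k.2
    simpa [ext0, res, k.2] using this
  · rintro rfl; exact resEq_refl _ _

lemma res_ext0 (n : ℕ) (p : Pre n) : res n (ext0 n p) = p := by
  funext k; simp [res, ext0, k.2]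

lemma resEq_iff_res_eq {n : ℕ} {x y : XX} : resEq n x y ↔ res n x = res n y := by
  constructor
  · intro h; funext k; exact h k k.2
  · intro h k hk; exact congrFun h ⟨k, hk⟩

lemma resEq_ext0_res (n : ℕ) (x : XX) : resEq n x (ext0 n (res n x)) := by
  intro k hk; simp [ext0, res, hk]

lemma cyl_eq_res_fiber (n : ℕ) (c : XX) : cyl n c = res n ⁻¹' {res n c} := by
  ext x; simp [mem_cyl, resEq_iff_res_eq, Set.mem_preimage]

/-- number of prefixes -/
def W (n : ℕ) : ℕ := ∏ k ∈ Finset.range n, (k + 2)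

lemma W_pos (n : ℕ) : 0 < W n := Finset.prod_pos fun _ _ => by omega

lemma two_pow_le_W (n : ℕ) : 2 ^ n ≤ W n := by
  unfold W
  calc 2 ^ n = ∏ _k ∈ Finset.range n, 2 := by
        rw [Finset.prod_const, Finset.card_range]
    _ ≤ ∏ k ∈ Finset.range n, (k + 2) :=
        Finset.prod_le_prod (fun _ _ => by omega) (fun _ _ => by omega)

lemma card_Pre (n : ℕ) : Fintype.card (Pre n) = W n := by
  rw [Fintype.card_pi]
  simp only [Fintype.card_fin]
  rw [Fin.prod_univ_eq_prod_range (fun k => k + 2) n]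
  rfl

lemma iUnion_cyl (n : ℕ) : (⋃ p : Pre n, cyl n (ext0 n p)) = Set.univ := by
  ext x
  simp only [Set.mem_iUnion, Set.mem_univ, iff_true]
  exact ⟨res n x, resEq_ext0_res n x⟩

lemma disjoint_cyl {n : ℕ} {p q : Pre n} (h : p ≠ q) :
    Disjoint (cyl n (ext0 n p)) (cyl n (ext0 n q)) := by
  rw [Set.disjoint_left]
  intro x hx hx'
  apply h
  have h1 := resEq_iff_res_eq.1 hx
  have h2 := resEq_iff_res_eq.1 hx'
  rw [res_ext0] at h1 h2
  rw [← h1, ← h2]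


/-! ## The measure -/

noncomputable def mu : Measure XX := Measure.addHaarMeasure ⊤

instance : mu.IsAddLeftInvariant := by unfold mu; infer_instance

instance mu_prob : IsProbabilityMeasure mu := by
  constructor
  have := Measure.addHaarMeasure_self (K₀ := (⊤ : TopologicalSpace.PositiveCompacts XX))
  rwa [TopologicalSpace.PositiveCompacts.coe_top] at this

lemma mu_cyl_eq_mu_cyl (n : ℕ) (c c' : XX) : mu (cyl n c) = mu (cyl n c') := by
  have key : cyl n c = (fun x => (c' - c) + x) ⁻¹' (cyl n c') := by
    ext x
    simp only [Set.mem_preimage, cyl, resEq, Set.mem_setOf_eq, Pi.add_apply, Pi.sub_apply]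
    constructor
    · intro h k hk; rw [h k hk]; exact sub_add_cancel _ _
    · intro h k hk
      have h2 : c' k - c k + x k = c' k - c k + c k := by
        rw [h k hk, sub_add_cancel]
      exact add_left_cancel h2
  rw [key, measure_preimage_add]

lemma mu_cyl (n : ℕ) (c : XX) : mu (cyl n c) = ((W n : ℝ≥0∞))⁻¹ := by
  classical
  have hdisj : Pairwise (Function.onFun Disjoint fun p : Pre n => cyl n (ext0 n p)) :=
    fun p q hpq => disjoint_cyl hpq
  have hmeas : ∀ p : Pre n, MeasurableSet (cyl n (ext0 n p)) :=
    fun p => measurableSet_cyl n (ext0 n p)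
  have hsum : mu (⋃ p : Pre n, cyl n (ext0 n p)) = ∑' p : Pre n, mu (cyl n (ext0 n p)) :=
    measure_iUnion hdisj hmeas
  rw [iUnion_cyl, measure_univ] at hsum
  have hconst : ∀ p : Pre n, mu (cyl n (ext0 n p)) = mu (cyl n c) :=
    fun p => mu_cyl_eq_mu_cyl n _ c
  rw [tsum_congr hconst, tsum_eq_sum (s := Finset.univ) (by simp), Finset.sum_const,
    nsmul_eq_mul, Finset.card_univ, card_Pre] at hsum
  have hW0 : ((W n : ℝ≥0∞)) ≠ 0 := by
    simp only [ne_eq, Nat.cast_eq_zero]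
    exact (W_pos n).ne'
  have hWtop : ((W n : ℝ≥0∞)) ≠ ⊤ := ENNReal.natCast_ne_top _
  calc mu (cyl n c) = (W n : ℝ≥0∞)⁻¹ * ((W n : ℝ≥0∞) * mu (cyl n c)) := by
        rw [← mul_assoc, ENNReal.inv_mul_cancel hW0 hWtop, one_mul]
    _ = (W n : ℝ≥0∞)⁻¹ := by rw [← hsum]; rw [mul_one]

/-! ## Cylinders generate the σ-algebra -/

def cylSet (m : ℕ) : Set (Set XX) := {s | ∃ n c, m ≤ n ∧ s = cyl n c}

lemma isPiSystem_cylSet (m : ℕ) : IsPiSystem (cylSet m) := by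
  rintro s ⟨n, c, hn, rfl⟩ t ⟨n', c', hn', rfl⟩ hne
  obtain ⟨x₀, hx₀c, hx₀c'⟩ := hne
  refine ⟨max n n', x₀, le_trans hn (le_max_left _ _), ?_⟩
  ext x
  simp only [Set.mem_inter_iff, mem_cyl] at *
  constructor
  · rintro ⟨h1, h2⟩ k hk
    rcases Nat.lt_or_ge k n with hkn | hkn
    · exact (h1 k hkn).trans (hx₀c k hkn).symm
    · have hkn' : k < n' := by omega
      exact (h2 k hkn').trans (hx₀c' k hkn').symm
  · intro h
    constructor
    · intro k hk
      exact (h k (lt_of_lt_of_le hk (le_max_left _ _))).trans (hx₀c k hk)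
    · intro k hk
      exact (h k (lt_of_lt_of_le hk (le_max_right _ _))).trans (hx₀c' k hk)

lemma pi_eq_generateFrom_cylSet (m : ℕ) :
    (inferInstance : MeasurableSpace XX) = .generateFrom (cylSet m) := by
  refine le_antisymm ?_ (MeasurableSpace.generateFrom_le ?_)
  · have hmeas : ∀ k : ℕ, @Measurable XX (Fin (k+2)) (.generateFrom (cylSet m)) _
        (fun x => x k) := by
      intro k
      refine @measurable_to_countable' (Fin (k+2)) XX _ _ (.generateFrom (cylSet m)) _ ?_
      intro v
      set N := max (k+1) m with hN
      have hkN : k < N := by omega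
      have hset : ((fun x : XX => x k) ⁻¹' {v}) =
          ⋃ (p : Pre N) (_ : ext0 N p k = v), cyl N (ext0 N p) := by
        ext x
        simp only [Set.mem_preimage, Set.mem_singleton_iff, Set.mem_iUnion]
        constructor
        · intro hxk
          refine ⟨res N x, ?_, resEq_ext0_res N x⟩
          simp [ext0, res, hkN, hxk]
        · rintro ⟨p, hp, hx⟩
          rw [← hp]
          exact hx k hkN
      rw [hset]
      refine MeasurableSet.iUnion fun p => MeasurableSet.iUnion fun _ =>
        MeasurableSpace.measurableSet_generateFrom ?_
      exact ⟨N, ext0 N p, le_max_right _ _, rfl⟩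
    have hid : @Measurable XX XX (.generateFrom (cylSet m)) _ id := by
      rw [@measurable_pi_iff]
      exact hmeas
    have := @measurable_iff_comap_le XX XX (.generateFrom (cylSet m)) _ id |>.1 hid
    rwa [MeasurableSpace.comap_id] at this
  · rintro s ⟨n, c, -, rfl⟩
    exact measurableSet_cyl n c

lemma measure_eq_of_cylSet (m : ℕ) (ν₁ ν₂ : Measure XX)
    [IsProbabilityMeasure ν₁] [IsProbabilityMeasure ν₂]
    (h : ∀ n c, m ≤ n → ν₁ (cyl n c) = ν₂ (cyl n c)) : ν₁ = ν₂ := by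
  refine ext_of_generate_finite (cylSet m) (pi_eq_generateFrom_cylSet m)
    (isPiSystem_cylSet m) ?_ (by simp)
  rintro s ⟨n, c, hn, rfl⟩
  exact h n c hn


/-! ## Measure preservation and measurability criteria -/

lemma measurable_of_resEq_congr (f : XX → XX) (m : ℕ)
    (h : ∀ n, m ≤ n → ∀ x y, resEq n x y → resEq n (f x) (f y)) : Measurable f := by
  rw [measurable_pi_iff]
  intro k
  set N := max (k+1) m with hN
  have hkN : k < N := by omega
  have key : (fun x => f x k) = (fun p : Pre N => f (ext0 N p) k) ∘ (res N) := by
    funext x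
    exact h N (le_max_right _ _) x (ext0 N (res N x)) (resEq_ext0_res N x) k hkN
  rw [key]
  exact Measurable.of_discrete.comp (measurable_pi_lambda _ fun k => measurable_pi_apply _)

lemma measurePreserving_of_cyl (f : XX → XX) (hf : Measurable f) (m : ℕ)
    (h : ∀ n, m ≤ n → ∀ c, ∃ c', f ⁻¹' cyl n c = cyl n c') :
    MeasurePreserving f mu mu := by
  refine ⟨hf, ?_⟩
  have : IsProbabilityMeasure (Measure.map f mu) := Measure.isProbabilityMeasure_map hf.aemeasurable
  refine measure_eq_of_cylSet m _ _ ?_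
  intro n c hn
  obtain ⟨c', hc'⟩ := h n hn c
  rw [Measure.map_apply hf (measurableSet_cyl n c), hc', mu_cyl, mu_cyl]

/-- preimage of cylinders under mutually inverse prefix-congruent maps -/
lemma preimage_cyl_of_inverse (f g : XX → XX) (n : ℕ)
    (hgf : ∀ x, g (f x) = x) (hfg : ∀ x, f (g x) = x)
    (hf : ∀ x y, resEq n x y → resEq n (f x) (f y))
    (hg : ∀ x y, resEq n x y → resEq n (g x) (g y)) (c : XX) :
    f ⁻¹' cyl n c = cyl n (g c) := by
  ext x
  simp only [Set.mem_preimage, mem_cyl]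
  constructor
  · intro hx
    have := hg _ _ hx
    rwa [hgf] at this
  · intro hx
    have := hf _ _ hx
    rwa [hfg] at this


/-! ## The odometer -/

def allZero : XX := fun _ => 0
def allLast : XX := fun k => Fin.last (k + 1)

lemma fin_add_one_ne_zero {k : ℕ} {a : Fin (k+2)} (h : a ≠ Fin.last (k+1)) : a + 1 ≠ 0 := by
  intro h0
  apply h
  apply add_right_cancel (b := (1 : Fin (k+2)))
  rw [h0, Fin.last_add_one]

lemma fin_sub_one_ne_last {k : ℕ} {a : Fin (k+2)} (h : a ≠ 0) : a - 1 ≠ Fin.last (k+1) := by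
  intro hl
  apply h
  have : a = Fin.last (k+1) + 1 := by rw [← hl, sub_add_cancel]
  rwa [Fin.last_add_one] at this

lemma fin_val_add_one {k : ℕ} {a : Fin (k+2)} (h : a ≠ Fin.last (k+1)) :
    (a + 1).val = a.val + 1 :=
  Fin.val_add_one_of_lt (h.lt_or_gt.resolve_right (by simpa using (Fin.le_last a).not_gt))

open Classical in
noncomputable def succX (x : XX) : XX :=
  if h : ∃ k, x k ≠ allLast k then
    (fun j => if j < Nat.find h then 0 else if j = Nat.find h then x j + 1 else x j)
  else allZero

open Classical in
noncomputable def predX (x : XX) : XX :=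
  if h : ∃ k, x k ≠ 0 then
    (fun j => if j < Nat.find h then allLast j else if j = Nat.find h then x j - 1 else x j)
  else allLast

lemma succX_apply {x : XX} (h : ∃ k, x k ≠ allLast k) (j : ℕ) :
    succX x j = if j < Nat.find h then 0 else if j = Nat.find h then x j + 1 else x j := by
  rw [succX, dif_pos h]

lemma succX_apply_neg {x : XX} (h : ¬ ∃ k, x k ≠ allLast k) : succX x = allZero := by
  rw [succX, dif_neg h]

lemma predX_apply {x : XX} (h : ∃ k, x k ≠ 0) (j : ℕ) :
    predX x j = if j < Nat.find h then allLast j else if j = Nat.find h then x j - 1 else x j := by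
  rw [predX, dif_pos h]

lemma predX_apply_neg {x : XX} (h : ¬ ∃ k, x k ≠ 0) : predX x = allLast := by
  rw [predX, dif_neg h]

lemma predX_succX (x : XX) : predX (succX x) = x := by
  by_cases h : ∃ k, x k ≠ allLast k
  · have hxk0 : x (Nat.find h) ≠ allLast (Nat.find h) := Nat.find_spec h
    have hmin : ∀ j, j < Nat.find h → x j = allLast j := fun j hj => not_not.1 (Nat.find_min h hj)
    have hsk0 : succX x (Nat.find h) = x (Nat.find h) + 1 := by
      rw [succX_apply h]; simp
    have h2 : ∃ j, (succX x) j ≠ 0 := by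
      refine ⟨Nat.find h, ?_⟩
      rw [hsk0]; exact fin_add_one_ne_zero hxk0
    have hfind2 : Nat.find h2 = Nat.find h := by
      rw [Nat.find_eq_iff]
      refine ⟨by rw [hsk0]; exact fin_add_one_ne_zero hxk0, ?_⟩
      intro j hj
      rw [not_not, succX_apply h, if_pos hj]
    funext j
    rw [predX_apply h2, hfind2]
    rcases lt_trichotomy j (Nat.find h) with hj | hj | hj
    · rw [if_pos hj]; exact (hmin j hj).symm
    · subst hj
      rw [if_neg (lt_irrefl _), if_pos rfl, hsk0, add_sub_cancel_right]
    · rw [if_neg (show ¬ j < Nat.find h by omega), if_neg (show j ≠ Nat.find h by omega),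
        succX_apply h, if_neg (show ¬ j < Nat.find h by omega),
        if_neg (show j ≠ Nat.find h by omega)]
  · rw [succX_apply_neg h]
    have h2 : ¬ ∃ j, allZero j ≠ 0 := by push_neg; intro j; rfl
    rw [predX_apply_neg h2]
    push_neg at h
    funext j; exact (h j).symm

lemma succX_predX (x : XX) : succX (predX x) = x := by
  by_cases h : ∃ k, x k ≠ 0
  · have hxk0 : x (Nat.find h) ≠ 0 := Nat.find_spec h
    have hmin : ∀ j, j < Nat.find h → x j = 0 := fun j hj => not_not.1 (Nat.find_min h hj)
    have hsk0 : predX x (Nat.find h) = x (Nat.find h) - 1 := by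
      rw [predX_apply h]; simp
    have h2 : ∃ j, (predX x) j ≠ allLast j := by
      refine ⟨Nat.find h, ?_⟩
      rw [hsk0]; exact fin_sub_one_ne_last hxk0
    have hfind2 : Nat.find h2 = Nat.find h := by
      rw [Nat.find_eq_iff]
      refine ⟨by rw [hsk0]; exact fin_sub_one_ne_last hxk0, ?_⟩
      intro j hj
      rw [not_not, predX_apply h, if_pos hj]
    funext j
    rw [succX_apply h2, hfind2]
    rcases lt_trichotomy j (Nat.find h) with hj | hj | hj
    · rw [if_pos hj]; exact (hmin j hj).symm
    · subst hj
      rw [if_neg (lt_irrefl _), if_pos rfl, hsk0, sub_add_cancel]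
    · rw [if_neg (show ¬ j < Nat.find h by omega), if_neg (show j ≠ Nat.find h by omega),
        predX_apply h, if_neg (show ¬ j < Nat.find h by omega),
        if_neg (show j ≠ Nat.find h by omega)]
  · rw [predX_apply_neg h]
    have h2 : ¬ ∃ j, allLast j ≠ allLast j := by push_neg; intro j; rfl
    rw [succX_apply_neg h2]
    push_neg at h
    funext j; exact (h j).symm

/-- the odometer changes nothing below level `n` when the first `n` digits are all maximal -/
lemma succX_eq_zero_of_allLast {n : ℕ} {x : XX} (hx : ∀ k, k < n → x k = allLast k)
    {j : ℕ} (hj : j < n) : succX x j = 0 := by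
  by_cases h : ∃ k, x k ≠ allLast k
  · rw [succX_apply h]
    have hn : n ≤ Nat.find h := by
      by_contra hlt
      push_neg at hlt
      exact (Nat.find_spec h) (hx _ hlt)
    rw [if_pos (lt_of_lt_of_le hj hn)]
  · rw [succX_apply_neg h]; rfl

lemma succX_congr {n : ℕ} {x y : XX} (hxy : resEq n x y) : resEq n (succX x) (succX y) := by
  by_cases hb : ∃ k, k < n ∧ x k ≠ allLast k
  · obtain ⟨k, hkn, hk⟩ := hb
    have hx : ∃ k, x k ≠ allLast k := ⟨k, hk⟩
    have hy : ∃ k, y k ≠ allLast k := ⟨k, by rw [← hxy k hkn]; exact hk⟩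
    have hxn : Nat.find hx < n := lt_of_le_of_lt (Nat.find_min' hx hk) hkn
    have hyn : Nat.find hy < n := by
      refine lt_of_le_of_lt (Nat.find_min' hy ?_) hkn
      rw [← hxy k hkn]; exact hk
    have heq : Nat.find hx = Nat.find hy := by
      refine le_antisymm (Nat.find_min' hx ?_) (Nat.find_min' hy ?_)
      · rw [hxy _ hyn]; exact Nat.find_spec hy
      · rw [← hxy _ hxn]; exact Nat.find_spec hx
    intro j hjn
    rw [succX_apply hx, succX_apply hy, ← heq]
    by_cases h1 : j < Nat.find hx
    · rw [if_pos h1, if_pos h1]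
    · rw [if_neg h1, if_neg h1]
      by_cases h2 : j = Nat.find hx
      · rw [if_pos h2, if_pos h2, hxy j hjn]
      · rw [if_neg h2, if_neg h2]; exact hxy j hjn
  · push_neg at hb
    have hby : ∀ k, k < n → y k = allLast k := fun k hk => by
      rw [← hxy k hk]; exact hb k hk
    intro j hj
    rw [succX_eq_zero_of_allLast hb hj, succX_eq_zero_of_allLast hby hj]

lemma predX_eq_allLast_of_allZero {n : ℕ} {x : XX} (hx : ∀ k, k < n → x k = 0)
    {j : ℕ} (hj : j < n) : predX x j = allLast j := by
  by_cases h : ∃ k, x k ≠ 0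
  · rw [predX_apply h]
    have hn : n ≤ Nat.find h := by
      by_contra hlt
      push_neg at hlt
      exact (Nat.find_spec h) (hx _ hlt)
    rw [if_pos (lt_of_lt_of_le hj hn)]
  · rw [predX_apply_neg h]

lemma predX_congr {n : ℕ} {x y : XX} (hxy : resEq n x y) : resEq n (predX x) (predX y) := by
  by_cases hb : ∃ k, k < n ∧ x k ≠ 0
  · obtain ⟨k, hkn, hk⟩ := hb
    have hx : ∃ k, x k ≠ 0 := ⟨k, hk⟩
    have hy : ∃ k, y k ≠ 0 := ⟨k, by rw [← hxy k hkn]; exact hk⟩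
    have hxn : Nat.find hx < n := lt_of_le_of_lt (Nat.find_min' hx hk) hkn
    have hyn : Nat.find hy < n := by
      refine lt_of_le_of_lt (Nat.find_min' hy ?_) hkn
      rw [← hxy k hkn]; exact hk
    have heq : Nat.find hx = Nat.find hy := by
      refine le_antisymm (Nat.find_min' hx ?_) (Nat.find_min' hy ?_)
      · rw [hxy _ hyn]; exact Nat.find_spec hy
      · rw [← hxy _ hxn]; exact Nat.find_spec hx
    intro j hjn
    rw [predX_apply hx, predX_apply hy, ← heq]
    by_cases h1 : j < Nat.find hx
    · rw [if_pos h1, if_pos h1]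
    · rw [if_neg h1, if_neg h1]
      by_cases h2 : j = Nat.find hx
      · rw [if_pos h2, if_pos h2, hxy j hjn]
      · rw [if_neg h2, if_neg h2]; exact hxy j hjn
  · push_neg at hb
    have hby : ∀ k, k < n → y k = 0 := fun k hk => by
      rw [← hxy k hk]; exact hb k hk
    intro j hj
    rw [predX_eq_allLast_of_allZero hb hj, predX_eq_allLast_of_allZero hby hj]

/-! ### values of digit strings -/

def val (n : ℕ) (x : XX) : ℕ := ∑ k ∈ Finset.range n, (x k).val * W k

lemma W_succ (n : ℕ) : W (n+1) = W n * (n+2) := Finset.prod_range_succ _ _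

lemma val_succ (n : ℕ) (x : XX) : val (n+1) x = val n x + (x n).val * W n :=
  Finset.sum_range_succ _ _

lemma val_lt (n : ℕ) (x : XX) : val n x < W n := by
  induction n with
  | zero => simp [val, W]
  | succ n ih =>
    rw [val_succ, W_succ]
    have h1 : (x n).val ≤ n + 1 := by have := (x n).isLt; omega
    have h2 : (x n).val * W n ≤ (n+1) * W n := Nat.mul_le_mul_right _ h1
    have h3 : W n * (n+2) = (n+1) * W n + W n := by ring
    omega

lemma val_allLast {n : ℕ} {x : XX} (hx : ∀ k, k < n → x k = allLast k) :
    val n x = W n - 1 := by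
  induction n with
  | zero => simp [val, W]
  | succ n ih =>
    rw [val_succ, W_succ]
    rw [ih (fun k hk => hx k (Nat.lt_succ_of_lt hk)), hx n (Nat.lt_succ_self n)]
    have hL : ((allLast n : Fin (n+2))).val = n + 1 := rfl
    rw [hL]
    have hW := W_pos n
    have h3 : W n * (n+2) = (n+1) * W n + W n := by ring
    omega

lemma val_zeroBelow {n : ℕ} {x : XX} (hx : ∀ k, k < n → x k = 0) : val n x = 0 := by
  unfold val
  refine Finset.sum_eq_zero fun k hk => ?_
  rw [hx k (Finset.mem_range.1 hk)]
  simp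

lemma val_inj {n : ℕ} {x y : XX} (h : val n x = val n y) : resEq n x y := by
  induction n with
  | zero => intro k hk; omega
  | succ n ih =>
    rw [val_succ, val_succ] at h
    have hx := val_lt n x
    have hy := val_lt n y
    have hW := W_pos n
    have hdig : (x n).val = (y n).val := by
      have e1 : (val n x + (x n).val * W n) / W n = (x n).val := by
        rw [Nat.add_mul_div_right _ _ hW, Nat.div_eq_of_lt hx, Nat.zero_add]
      have e2 : (val n y + (y n).val * W n) / W n = (y n).val := by
        rw [Nat.add_mul_div_right _ _ hW, Nat.div_eq_of_lt hy, Nat.zero_add]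
      rw [← e1, ← e2, h]
    have hvals : val n x = val n y := by
      have e1 : (val n x + (x n).val * W n) % W n = val n x := by
        rw [Nat.add_mul_mod_self_right, Nat.mod_eq_of_lt hx]
      have e2 : (val n y + (y n).val * W n) % W n = val n y := by
        rw [Nat.add_mul_mod_self_right, Nat.mod_eq_of_lt hy]
      rw [← e1, ← e2, h]
    intro k hk
    rcases Nat.lt_or_ge k n with hkn | hkn
    · exact ih hvals k hkn
    · have : k = n := by omega
      subst this
      exact Fin.ext hdig

lemma val_succX_exact {n : ℕ} {x : XX} (h : ∃ k, k < n ∧ x k ≠ allLast k) :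
    val n (succX x) = val n x + 1 ∧ ∀ k, n ≤ k → succX x k = x k := by
  obtain ⟨k, hkn, hk⟩ := h
  have hx : ∃ k, x k ≠ allLast k := ⟨k, hk⟩
  set k0 := Nat.find hx with hk0def
  have hk0n : k0 < n := lt_of_le_of_lt (Nat.find_min' hx hk) hkn
  have hxk0 : x k0 ≠ allLast k0 := Nat.find_spec hx
  have hmin : ∀ j, j < k0 → x j = allLast j := fun j hj => not_not.1 (Nat.find_min hx hj)
  have htail : ∀ j, k0 < j → succX x j = x j := by
    intro j hj
    rw [succX_apply hx, if_neg (show ¬ j < Nat.find hx by omega),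
      if_neg (show j ≠ Nat.find hx by omega)]
  constructor
  · -- value computation
    have base : val (k0+1) (succX x) = val (k0+1) x + 1 := by
      rw [val_succ, val_succ]
      have hzero : val k0 (succX x) = 0 := by
        refine val_zeroBelow fun j hj => ?_
        rw [succX_apply hx, if_pos hj]
      have hlastv : val k0 x = W k0 - 1 := val_allLast hmin
      have hdig : (succX x k0).val = (x k0).val + 1 := by
        have : succX x k0 = x k0 + 1 := by
          rw [succX_apply hx, if_neg (by omega), if_pos hk0def]
        rw [this, fin_val_add_one hxk0]
      rw [hzero, hlastv, hdig]
      have hW := W_pos k0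
      have : ((x k0).val + 1) * W k0 = (x k0).val * W k0 + W k0 := by ring
      omega
    -- extend to n by induction
    have ext : ∀ m, val (k0+1+m) (succX x) = val (k0+1+m) x + 1 := by
      intro m
      induction m with
      | zero => simpa using base
      | succ m ih =>
        have hidx : k0 < k0 + 1 + m := by omega
        have : k0 + 1 + (m+1) = (k0+1+m) + 1 := by omega
        rw [this, val_succ, val_succ, ih, htail _ hidx]
        omega
    have hn : n = k0 + 1 + (n - (k0+1)) := by omega
    rw [hn]
    exact ext _
  · intro j hj
    exact htail j (lt_of_lt_of_le hk0n hj)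

lemma val_succX_modeq (n : ℕ) (x : XX) :
    Nat.ModEq (W n) (val n (succX x)) (val n x + 1) := by
  by_cases h : ∃ k, k < n ∧ x k ≠ allLast k
  · rw [(val_succX_exact h).1]
  · push_neg at h
    have h1 : val n (succX x) = 0 := val_zeroBelow fun j hj => succX_eq_zero_of_allLast h hj
    have h2 : val n x = W n - 1 := val_allLast h
    have hW := W_pos n
    have h3 : val n x + 1 = W n := by omega
    rw [h1, h3]
    show 0 % W n = W n % W n
    simp [Nat.mod_self]

lemma val_iterate_modeq (n : ℕ) (x : XX) (m : ℕ) :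
    Nat.ModEq (W n) (val n (succX^[m] x)) (val n x + m) := by
  induction m with
  | zero => simpa using Nat.ModEq.refl (val n x)
  | succ m ih =>
    rw [Function.iterate_succ_apply']
    calc val n (succX (succX^[m] x)) ≡ val n (succX^[m] x) + 1 [MOD W n] :=
          val_succX_modeq n _
      _ ≡ (val n x + m) + 1 [MOD W n] := Nat.ModEq.add_right 1 ih
      _ = val n x + (m+1) := by omega

lemma succX_iterate_ne {m : ℕ} (hm : 0 < m) (x : XX) : succX^[m] x ≠ x := by
  intro he
  have h1 := val_iterate_modeq m x m
  rw [he] at h1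
  have h2 : Nat.ModEq (W m) (val m x + 0) (val m x + m) := by
    simpa using h1
  have h3 : Nat.ModEq (W m) 0 m := Nat.ModEq.add_left_cancel' _ h2
  have h4 : W m ∣ m := (Nat.modEq_zero_iff_dvd).1 h3.symm
  have h5 : W m ≤ m := Nat.le_of_dvd hm h4
  have h6 : m < 2 ^ m := Nat.lt_two_pow_self
  have h7 := two_pow_le_W m
  omega

/-- reaching a tail-equivalent point by iterating the odometer -/
lemma succX_reach {n : ℕ} {y : XX} :
    ∀ (m : ℕ) (x : XX), (∀ k, n ≤ k → x k = y k) → val n x + m = val n y →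
      succX^[m] x = y := by
  intro m
  induction m with
  | zero =>
    intro x htail hval
    rw [Function.iterate_zero_apply]
    funext k
    rcases Nat.lt_or_ge k n with hk | hk
    · exact val_inj (by omega) k hk
    · exact htail k hk
  | succ m ih =>
    intro x htail hval
    have hyn := val_lt n y
    have hex : ∃ k, k < n ∧ x k ≠ allLast k := by
      by_contra hc
      push_neg at hc
      have : val n x = W n - 1 := val_allLast hc
      have hW := W_pos n
      omega
    obtain ⟨hval1, htail1⟩ := val_succX_exact hex
    rw [Function.iterate_succ_apply]
    exact ih (succX x) (fun k hk => (htail1 k hk).trans (htail k hk)) (by omega)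

/-! ### the odometer as a permutation -/

noncomputable def T : Equiv.Perm XX := ⟨succX, predX, predX_succX, succX_predX⟩

lemma T_pow_apply (m : ℕ) (x : XX) : (T ^ m) x = succX^[m] x := by
  have := Equiv.Perm.coe_pow T m
  exact congrFun this x

lemma T_inv_pow_apply (m : ℕ) (x : XX) : ((T ^ m)⁻¹) x = predX^[m] x := by
  have h1 : (T ^ m)⁻¹ = T⁻¹ ^ m := (inv_pow T m).symm
  rw [h1]
  have := Equiv.Perm.coe_pow T⁻¹ m
  exact congrFun this x

lemma exists_zpow_of_tailEq {x y : XX} (h : tailEq x y) : ∃ z : ℤ, (T ^ z) x = y := by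
  obtain ⟨n, hn⟩ := h
  rcases le_total (val n x) (val n y) with hle | hle
  · refine ⟨((val n y - val n x : ℕ) : ℤ), ?_⟩
    rw [zpow_natCast, T_pow_apply]
    exact succX_reach _ x hn (by omega)
  · set m := val n x - val n y with hm
    refine ⟨-(m : ℤ), ?_⟩
    rw [zpow_neg, zpow_natCast]
    have hr : (T ^ m) y = x := by
      rw [T_pow_apply]
      exact succX_reach _ y (fun k hk => (hn k hk).symm) (by omega)
    rw [← hr]; exact Equiv.symm_apply_apply _ _

lemma tailEq_succX {x : XX} (h : x ≠ allLast) : tailEq x (succX x) := by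
  have hex : ∃ k, x k ≠ allLast k := by
    by_contra hc
    push_neg at hc
    exact h (funext hc)
  refine ⟨Nat.find hex + 1, fun k hk => ?_⟩
  rw [succX_apply hex, if_neg (by omega), if_neg (by omega)]

lemma tailEq_predX {x : XX} (h : x ≠ allZero) : tailEq (predX x) x := by
  have hex : ∃ k, x k ≠ 0 := by
    by_contra hc
    push_neg at hc
    exact h (funext hc)
  refine ⟨Nat.find hex + 1, fun k hk => ?_⟩
  rw [predX_apply hex, if_neg (by omega), if_neg (by omega)]

lemma tailEq_T_zpow {x : XX} (hL : ¬ tailEq x allLast) (hZ : ¬ tailEq x allZero) (z : ℤ) :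
    tailEq x ((T ^ z) x) := by
  have hpos : ∀ m : ℕ, tailEq x (succX^[m] x) := by
    intro m
    induction m with
    | zero => exact tailEq_refl x
    | succ m ih =>
      rw [Function.iterate_succ_apply']
      refine tailEq_trans ih (tailEq_succX ?_)
      intro he
      exact hL (he ▸ ih)
  have hneg : ∀ m : ℕ, tailEq x (predX^[m] x) := by
    intro m
    induction m with
    | zero => exact tailEq_refl x
    | succ m ih =>
      rw [Function.iterate_succ_apply']
      refine tailEq_trans ih (tailEq_symm (tailEq_predX ?_))
      intro he
      exact hZ (he ▸ ih)
  rcases le_or_gt 0 z with hz | hz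
  · obtain ⟨m, rfl⟩ := Int.eq_ofNat_of_zero_le hz
    rw [zpow_natCast, T_pow_apply]
    exact hpos m
  · obtain ⟨m, rfl⟩ : ∃ m : ℕ, z = -(m : ℤ) := ⟨z.natAbs, by omega⟩
    rw [zpow_neg, zpow_natCast, T_inv_pow_apply]
    exact hneg m


/-! ## Normal forms for finitary permutations -/

def Phi : ℕ → XX → Equiv.Perm ℕ
  | 0, _ => 1
  | (n+1), x => Phi n x * Equiv.swap ((x n : ℕ)) (n+1)

lemma Phi_fix {n : ℕ} (x : XX) : ∀ j, n + 1 ≤ j → Phi n x j = j := by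
  induction n with
  | zero => intro j _; rfl
  | succ n ih =>
    intro j hj
    show (Phi n x) (Equiv.swap ((x n : ℕ)) (n+1) j) = j
    have hxn : (x n : ℕ) ≤ n + 1 := by have := (x n).isLt; omega
    rw [Equiv.swap_apply_of_ne_of_ne (by omega) (by omega)]
    exact ih j (by omega)

lemma Phi_inv_fix {n : ℕ} (x : XX) : ∀ j, n + 1 ≤ j → (Phi n x)⁻¹ j = j := by
  intro j hj
  have h := Phi_fix x j hj
  calc (Phi n x)⁻¹ j = (Phi n x)⁻¹ (Phi n x j) := by rw [h]
    _ = j := Equiv.symm_apply_apply _ _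

lemma Phi_congr {n : ℕ} {x y : XX} (h : resEq n x y) : Phi n x = Phi n y := by
  induction n with
  | zero => rfl
  | succ n ih =>
    show Phi n x * _ = Phi n y * _
    rw [ih (resEq_mono h (Nat.le_succ n)), h n (Nat.lt_succ_self n)]

lemma Phi_top {n : ℕ} {x : XX} : (Phi (n+1) x)⁻¹ (n+1) = (x n : ℕ) := by
  show (Phi n x * Equiv.swap ((x n : ℕ)) (n+1))⁻¹ (n+1) = (x n : ℕ)
  rw [mul_inv_rev, Equiv.Perm.mul_apply, Phi_inv_fix x (n+1) le_rfl, Equiv.swap_inv,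
    Equiv.swap_apply_right]

lemma Phi_inj {n : ℕ} {x y : XX} (h : Phi n x = Phi n y) : resEq n x y := by
  induction n with
  | zero => intro k hk; omega
  | succ n ih =>
    have htop : (x n : ℕ) = (y n : ℕ) := by
      rw [← Phi_top (n := n) (x := x), ← Phi_top (n := n) (x := y), h]
    have hxy : x n = y n := Fin.ext htop
    have hcancel : Phi n x = Phi n y := by
      have h2 : Phi n x * Equiv.swap ((x n : ℕ)) (n+1)
          = Phi n y * Equiv.swap ((y n : ℕ)) (n+1) := h
      rw [htop] at h2
      exact mul_right_cancel h2
    intro k hk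
    rcases Nat.lt_or_ge k n with hkn | hkn
    · exact ih hcancel k hkn
    · have : k = n := by omega
      subst this; exact hxy

lemma Phi_surj {n : ℕ} : ∀ σ : Equiv.Perm ℕ, (∀ j, n + 1 ≤ j → σ j = j) →
    ∃ x : XX, Phi n x = σ := by
  induction n with
  | zero =>
    intro σ hσ
    refine ⟨fun k => 0, ?_⟩
    have h0 : σ 0 = 0 := by
      by_contra h0
      have h1 : 1 ≤ σ 0 := by omega
      have := hσ _ h1
      exact h0 (σ.injective this)
    ext j
    rcases Nat.eq_zero_or_pos j with rfl | hj
    · exact h0.symm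
    · exact (hσ j hj).symm
  | succ n ih =>
    intro σ hσ
    have hd : σ⁻¹ (n+1) ≤ n + 1 := by
      by_contra hlt
      push_neg at hlt
      have h1 := hσ _ (by omega : n + 1 + 1 ≤ σ⁻¹ (n+1))
      rw [show σ (σ⁻¹ (n+1)) = n+1 from Equiv.apply_symm_apply σ (n+1)] at h1
      omega
    have hσd : σ (σ⁻¹ (n+1)) = n + 1 := Equiv.apply_symm_apply σ (n+1)
    have hfix' : ∀ j, n + 1 ≤ j → (σ * Equiv.swap (σ⁻¹ (n+1)) (n+1)) j = j := by
      intro j hj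
      rcases eq_or_lt_of_le hj with rfl | hj'
      · rw [Equiv.Perm.mul_apply, Equiv.swap_apply_right, hσd]
      · rw [Equiv.Perm.mul_apply, Equiv.swap_apply_of_ne_of_ne (by omega) (by omega),
          hσ j (by omega)]
    obtain ⟨x', hx'⟩ := ih _ hfix'
    refine ⟨Function.update x' n ⟨σ⁻¹ (n+1), by omega⟩, ?_⟩
    have hups : resEq n (Function.update x' n (⟨σ⁻¹ (n+1), by omega⟩ : Fin (n+2))) x' :=
      fun k hk => Function.update_of_ne (by omega) _ _
    show Phi n _ * Equiv.swap _ (n+1) = σ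
    rw [Phi_congr hups, hx']
    have hun : ((Function.update x' n (⟨σ⁻¹ (n+1), by omega⟩ : Fin (n+2)) n : Fin (n+2)) : ℕ)
        = σ⁻¹ (n+1) := by rw [Function.update_self]
    rw [hun, mul_assoc, Equiv.swap_mul_self, mul_one]

/-! ## The relation defining the action -/

def Rel (σ : Equiv.Perm ℕ) (x y : XX) : Prop :=
  ∃ m, (∀ k, m ≤ k → y k = x k) ∧ Phi m y = σ * Phi m x

lemma Rel_phi {σ : Equiv.Perm ℕ} {x y : XX} (h : Rel σ x y) :
    ∃ m, ∀ n, m ≤ n → ((∀ k, n ≤ k → y k = x k) ∧ Phi n y = σ * Phi n x) := by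
  obtain ⟨m, htail, hphi⟩ := h
  refine ⟨m, fun n hn => ⟨fun k hk => htail k (le_trans hn hk), ?_⟩⟩
  induction n, hn using Nat.le_induction with
  | base => exact hphi
  | succ n hn ih =>
    show Phi n y * _ = σ * (Phi n x * _)
    rw [ih, htail n (by omega), mul_assoc]

lemma Rel_unique {σ : Equiv.Perm ℕ} {x y y' : XX} (h : Rel σ x y) (h' : Rel σ x y') :
    y = y' := by
  obtain ⟨m, H⟩ := Rel_phi h
  obtain ⟨m', H'⟩ := Rel_phi h'
  obtain ⟨ht, hp⟩ := H (max m m') (le_max_left _ _)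
  obtain ⟨ht', hp'⟩ := H' (max m m') (le_max_right _ _)
  funext k
  rcases Nat.lt_or_ge k (max m m') with hk | hk
  · exact Phi_inj (hp.trans hp'.symm) k hk
  · exact (ht k hk).trans (ht' k hk).symm

lemma Rel_exists (σ : Equiv.Perm ℕ) (hσ : ∃ m, ∀ j, m ≤ j → σ j = j) (x : XX) :
    ∃ y, Rel σ x y := by
  obtain ⟨m, hm⟩ := hσ
  have hfix : ∀ j, m + 1 ≤ j → (σ * Phi m x) j = j := by
    intro j hj
    rw [Equiv.Perm.mul_apply, Phi_fix x j hj]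
    exact hm j (by omega)
  obtain ⟨x', hx'⟩ := Phi_surj _ hfix
  refine ⟨fun k => if h : k < m then x' k else x k, m, fun k hk => dif_neg (by omega), ?_⟩
  have hres : resEq m (fun k => if h : k < m then x' k else x k) x' := fun k hk => dif_pos hk
  rw [Phi_congr hres, hx']

lemma Rel_one (x : XX) : Rel 1 x x := ⟨0, fun _ _ => rfl, by simp⟩

lemma Rel_mul {σ τ : Equiv.Perm ℕ} {x y z : XX} (h : Rel σ x y) (h' : Rel τ y z) :
    Rel (τ * σ) x z := by
  obtain ⟨m, H⟩ := Rel_phi h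
  obtain ⟨m', H'⟩ := Rel_phi h'
  obtain ⟨ht, hp⟩ := H (max m m') (le_max_left _ _)
  obtain ⟨ht', hp'⟩ := H' (max m m') (le_max_right _ _)
  refine ⟨max m m', fun k hk => (ht' k hk).trans (ht k hk), ?_⟩
  rw [hp', hp, mul_assoc]

lemma Rel_inv {σ : Equiv.Perm ℕ} {x y : XX} (h : Rel σ x y) : Rel σ⁻¹ y x := by
  obtain ⟨m, htail, hphi⟩ := h
  refine ⟨m, fun k hk => (htail k hk).symm, ?_⟩
  rw [hphi, ← mul_assoc, inv_mul_cancel, one_mul]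

lemma Rel_strong {σ : Equiv.Perm ℕ} {x y : XX} (hrel : Rel σ x y) {m : ℕ}
    (hm : ∀ j, m ≤ j → σ j = j) :
    ∀ n, m ≤ n → ((∀ k, n ≤ k → y k = x k) ∧ Phi n y = σ * Phi n x) := by
  obtain ⟨m₀, H⟩ := Rel_phi hrel
  have hσinv : ∀ j, m ≤ j → σ⁻¹ j = j := by
    intro j hj
    calc σ⁻¹ j = σ⁻¹ (σ j) := by rw [hm j hj]
      _ = j := Equiv.symm_apply_apply _ _
  have hdown : ∀ n, m ≤ n →
      ((∀ k, n + 1 ≤ k → y k = x k) ∧ Phi (n+1) y = σ * Phi (n+1) x) →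
      ((∀ k, n ≤ k → y k = x k) ∧ Phi n y = σ * Phi n x) := by
    rintro n hn ⟨htail, hphi⟩
    have hyx : y n = x n := by
      apply Fin.ext
      rw [← Phi_top (n := n) (x := y), ← Phi_top (n := n) (x := x), hphi, mul_inv_rev,
        Equiv.Perm.mul_apply, hσinv (n+1) (by omega)]
    refine ⟨?_, ?_⟩
    · intro k hk
      rcases Nat.lt_or_ge k (n+1) with hk1 | hk1
      · have : k = n := by omega
        subst this; exact hyx
      · exact htail k hk1
    · have h2 : Phi n y * Equiv.swap ((y n : ℕ)) (n+1)
          = σ * (Phi n x * Equiv.swap ((x n : ℕ)) (n+1)) := hphi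
      rw [hyx, ← mul_assoc] at h2
      exact mul_right_cancel h2
  have key : ∀ d n, m ≤ n → m₀ ≤ n + d →
      ((∀ k, n ≤ k → y k = x k) ∧ Phi n y = σ * Phi n x) := by
    intro d
    induction d with
    | zero => intro n hn h0; exact H n (by omega)
    | succ d ih =>
      intro n hn hd
      rcases le_or_gt m₀ n with h1 | h1
      · exact H n h1
      · exact hdown n hn (ih (n+1) (by omega) (by omega))
  intro n hn
  exact key m₀ n hn (by omega)

/-! ## The action map -/

open Classical in
noncomputable def act (σ : Equiv.Perm ℕ) (x : XX) : XX :=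
  if h : ∃ m, ∀ j, m ≤ j → σ j = j then Classical.choose (Rel_exists σ h x) else x

lemma act_rel (σ : Equiv.Perm ℕ) (h : ∃ m, ∀ j, m ≤ j → σ j = j) (x : XX) :
    Rel σ x (act σ x) := by
  rw [act, dif_pos h]
  exact Classical.choose_spec (Rel_exists σ h x)

lemma bound_one : ∃ m, ∀ j, m ≤ j → (1 : Equiv.Perm ℕ) j = j := ⟨0, fun _ _ => rfl⟩

lemma bound_inv {σ : Equiv.Perm ℕ} (h : ∃ m, ∀ j, m ≤ j → σ j = j) :
    ∃ m, ∀ j, m ≤ j → σ⁻¹ j = j := by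
  obtain ⟨m, hm⟩ := h
  refine ⟨m, fun j hj => ?_⟩
  calc σ⁻¹ j = σ⁻¹ (σ j) := by rw [hm j hj]
    _ = j := Equiv.symm_apply_apply _ _

lemma bound_mul {σ τ : Equiv.Perm ℕ} (h : ∃ m, ∀ j, m ≤ j → σ j = j)
    (h' : ∃ m, ∀ j, m ≤ j → τ j = j) : ∃ m, ∀ j, m ≤ j → (σ * τ) j = j := by
  obtain ⟨m, hm⟩ := h
  obtain ⟨m', hm'⟩ := h'
  refine ⟨max m m', fun j hj => ?_⟩
  rw [Equiv.Perm.mul_apply, hm' j (le_trans (le_max_right _ _) hj),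
    hm j (le_trans (le_max_left _ _) hj)]

lemma act_one (x : XX) : act 1 x = x :=
  Rel_unique (act_rel 1 bound_one x) (Rel_one x)

lemma act_mul {σ τ : Equiv.Perm ℕ} (hσ : ∃ m, ∀ j, m ≤ j → σ j = j)
    (hτ : ∃ m, ∀ j, m ≤ j → τ j = j) (x : XX) :
    act (τ * σ) x = act τ (act σ x) :=
  Rel_unique (act_rel (τ * σ) (bound_mul hτ hσ) x)
    (Rel_mul (act_rel σ hσ x) (act_rel τ hτ (act σ x)))

lemma act_inv {σ : Equiv.Perm ℕ} (hσ : ∃ m, ∀ j, m ≤ j → σ j = j) (x : XX) :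
    act σ⁻¹ (act σ x) = x :=
  Rel_unique (act_rel σ⁻¹ (bound_inv hσ) (act σ x)) (Rel_inv (act_rel σ hσ x))

lemma act_congr {σ : Equiv.Perm ℕ} {m : ℕ} (hm : ∀ j, m ≤ j → σ j = j)
    {n : ℕ} (hn : m ≤ n) {x y : XX} (hxy : resEq n x y) :
    resEq n (act σ x) (act σ y) := by
  obtain ⟨ht1, hp1⟩ := Rel_strong (act_rel σ ⟨m, hm⟩ x) hm n hn
  obtain ⟨ht2, hp2⟩ := Rel_strong (act_rel σ ⟨m, hm⟩ y) hm n hn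
  apply Phi_inj
  rw [hp1, hp2, Phi_congr hxy]

lemma act_tailEq {σ : Equiv.Perm ℕ} (hσ : ∃ m, ∀ j, m ≤ j → σ j = j) (x : XX) :
    tailEq x (act σ x) := by
  obtain ⟨m, htail, -⟩ := act_rel σ hσ x
  exact ⟨m, fun k hk => (htail k hk).symm⟩

lemma act_eq_self_iff {σ : Equiv.Perm ℕ} (hσ : ∃ m, ∀ j, m ≤ j → σ j = j) (x : XX)
    (h : act σ x = x) : σ = 1 := by
  have hrel : Rel σ x x := by
    have := act_rel σ hσ x
    rwa [h] at this
  obtain ⟨m, -, hphi⟩ := hrel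
  exact right_eq_mul.1 hphi

lemma exists_act_of_tailEq {x y : XX} (h : tailEq x y) :
    ∃ σ : Equiv.Perm ℕ, {j | σ j ≠ j}.Finite ∧ (∃ m, ∀ j, m ≤ j → σ j = j) ∧ act σ x = y := by
  obtain ⟨n, hn⟩ := h
  set σ := Phi n y * (Phi n x)⁻¹ with hσdef
  have hfix : ∀ j, n + 1 ≤ j → σ j = j := by
    intro j hj
    rw [hσdef, Equiv.Perm.mul_apply, Phi_inv_fix x j hj, Phi_fix y j hj]
  have hfin : {j | σ j ≠ j}.Finite := by
    refine Set.Finite.subset (Set.finite_Iio (n+1)) ?_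
    intro j hj
    by_contra hge
    simp only [Set.mem_Iio, not_lt] at hge
    exact hj (hfix j hge)
  have hrel : Rel σ x y := by
    refine ⟨n, fun k hk => (hn k hk).symm, ?_⟩
    rw [hσdef, mul_assoc, inv_mul_cancel, mul_one]
  exact ⟨σ, hfin, ⟨n+1, hfix⟩, (Rel_unique (act_rel σ ⟨n+1, hfix⟩ x) hrel)⟩


/-! ## Measure preservation of the two dynamics -/

lemma measurable_succX : Measurable succX :=
  measurable_of_resEq_congr succX 0 fun _ _ _ _ h => succX_congr h

lemma measurable_predX : Measurable predX :=
  measurable_of_resEq_congr predX 0 fun _ _ _ _ h => predX_congr h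

lemma mp_succX : MeasurePreserving succX mu mu := by
  refine measurePreserving_of_cyl succX measurable_succX 0 fun n _ c => ⟨predX c, ?_⟩
  exact preimage_cyl_of_inverse succX predX n predX_succX succX_predX
    (fun _ _ h => succX_congr h) (fun _ _ h => predX_congr h) c

lemma mp_predX : MeasurePreserving predX mu mu := by
  refine measurePreserving_of_cyl predX measurable_predX 0 fun n _ c => ⟨succX c, ?_⟩
  exact preimage_cyl_of_inverse predX succX n succX_predX predX_succX
    (fun _ _ h => predX_congr h) (fun _ _ h => succX_congr h) c

lemma mp_T_zpow (z : ℤ) : MeasurePreserving (⇑(T ^ z)) mu mu := by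
  rcases z with m | m
  · have hc : ⇑(T ^ (Int.ofNat m)) = succX^[m] := by
      rw [Int.ofNat_eq_coe, zpow_natCast]
      exact Equiv.Perm.coe_pow T m
    rw [hc]
    exact mp_succX.iterate m
  · have hc : ⇑(T ^ (Int.negSucc m)) = predX^[m+1] := by
      funext x
      rw [Int.negSucc_eq, zpow_neg]
      have hcast : ((m : ℤ) + 1) = ((m + 1 : ℕ) : ℤ) := by push_cast; ring
      rw [hcast, zpow_natCast]
      exact T_inv_pow_apply (m+1) x
    rw [hc]
    exact mp_predX.iterate (m+1)

lemma measurable_act {σ : Equiv.Perm ℕ} {m : ℕ} (hm : ∀ j, m ≤ j → σ j = j) :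
    Measurable (act σ) :=
  measurable_of_resEq_congr (act σ) m fun _ hn _ _ h => act_congr hm hn h

lemma mp_act {σ : Equiv.Perm ℕ} {m : ℕ} (hm : ∀ j, m ≤ j → σ j = j) :
    MeasurePreserving (act σ) mu mu := by
  have hσ : ∃ m, ∀ j, m ≤ j → σ j = j := ⟨m, hm⟩
  obtain ⟨m', hm'⟩ := bound_inv hσ
  have hminv : ∀ j, max m m' ≤ j → σ⁻¹ j = j := fun j hj => hm' j (le_trans (le_max_right _ _) hj)
  have hmM : ∀ j, max m m' ≤ j → σ j = j := fun j hj => hm j (le_trans (le_max_left _ _) hj)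
  refine measurePreserving_of_cyl (act σ) (measurable_act hm) (max m m') fun n hn c =>
    ⟨act σ⁻¹ c, ?_⟩
  refine preimage_cyl_of_inverse (act σ) (act σ⁻¹) n (act_inv hσ) ?_
    (fun _ _ h => act_congr hmM hn h) (fun _ _ h => act_congr hminv hn h) c
  intro x
  have := act_inv (bound_inv hσ) x
  rwa [inv_inv] at this

/-! ## Gluing and the ergodicity argument -/

def glue (n : ℕ) (p : Pre n) (x : XX) : XX := fun k => if h : k < n then p ⟨k, h⟩ else x k

lemma res_glue (n : ℕ) (p : Pre n) (x : XX) : res n (glue n p x) = p := by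
  funext k
  simp [res, glue, k.2]

lemma glue_res (n : ℕ) (x : XX) : glue n (res n x) x = x := by
  funext k
  by_cases h : k < n <;> simp [glue, res, h]

lemma glue_tail (n : ℕ) (p : Pre n) (x : XX) : ∀ k, n ≤ k → glue n p x k = x k := by
  intro k hk
  simp [glue, show ¬ k < n by omega]

lemma glue_glue (n : ℕ) (p q : Pre n) (x : XX) : glue n p (glue n q x) = glue n p x := by
  funext k
  by_cases h : k < n <;> simp [glue, h]

def swp (n : ℕ) (u v : Pre n) (x : XX) : XX := glue n (Equiv.swap u v (res n x)) x

lemma swp_invol (n : ℕ) (u v : Pre n) (x : XX) : swp n u v (swp n u v x) = x := by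
  unfold swp
  rw [res_glue, glue_glue, Equiv.swap_apply_self, glue_res]

lemma swp_congr {n n' : ℕ} (hn : n ≤ n') (u v : Pre n) {x y : XX} (h : resEq n' x y) :
    resEq n' (swp n u v x) (swp n u v y) := by
  intro k hk
  have hres : res n x = res n y := resEq_iff_res_eq.1 (resEq_mono h hn)
  unfold swp glue
  by_cases hkn : k < n
  · simp only [hkn, dif_pos]
    rw [hres]
  · simp only [hkn, dif_neg, not_false_iff]
    exact h k hk

lemma swp_tailEq (n : ℕ) (u v : Pre n) (x : XX) : tailEq x (swp n u v x) :=
  ⟨n, fun k hk => (glue_tail n _ x k hk).symm⟩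

lemma measurable_swp (n : ℕ) (u v : Pre n) : Measurable (swp n u v) :=
  measurable_of_resEq_congr _ n fun _ hn _ _ h => swp_congr hn u v h

lemma mp_swp (n : ℕ) (u v : Pre n) : MeasurePreserving (swp n u v) mu mu := by
  refine measurePreserving_of_cyl _ (measurable_swp n u v) n fun n' hn' c =>
    ⟨swp n u v c, ?_⟩
  exact preimage_cyl_of_inverse _ _ n' (swp_invol n u v) (swp_invol n u v)
    (fun _ _ h => swp_congr hn' u v h) (fun _ _ h => swp_congr hn' u v h) c

lemma sum_fibers (B : Set XX) (hB : MeasurableSet B) (n : ℕ) :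
    ∑' u : Pre n, mu (B ∩ cyl n (ext0 n u)) = mu B := by
  rw [← measure_iUnion (fun p q hpq => ((disjoint_cyl hpq).mono
    Set.inter_subset_right Set.inter_subset_right))
    (fun p => hB.inter (measurableSet_cyl n _))]
  rw [← Set.inter_iUnion, iUnion_cyl, Set.inter_univ]

lemma ergodic_of_tailSaturated {A : Set XX} (hA : MeasurableSet A)
    (hsat : ∀ x ∈ A, ∀ y, tailEq x y → y ∈ A) : mu A = 0 ∨ mu A = 1 := by
  classical
  have hswpA : ∀ n (u v : Pre n), (swp n u v) ⁻¹' A = A := by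
    intro n u v
    ext x
    simp only [Set.mem_preimage]
    constructor
    · intro hx
      exact hsat _ hx x (tailEq_symm (swp_tailEq n u v x))
    · intro hx
      exact hsat _ hx _ (swp_tailEq n u v x)
  have key : ∀ n (u v : Pre n),
      mu (A ∩ cyl n (ext0 n u)) = mu (A ∩ cyl n (ext0 n v)) := by
    intro n u v
    have hpre : (swp n u v) ⁻¹' (A ∩ cyl n (ext0 n v)) = A ∩ cyl n (ext0 n u) := by
      rw [Set.preimage_inter, hswpA]
      congr 1
      ext x
      rw [Set.mem_preimage, cyl_eq_res_fiber, cyl_eq_res_fiber]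
      simp only [Set.mem_preimage, Set.mem_singleton_iff, res_ext0]
      unfold swp
      rw [res_glue]
      constructor
      · intro h
        have := congrArg (Equiv.swap u v) h
        rwa [Equiv.swap_apply_self, Equiv.swap_apply_right] at this
      · intro h
        rw [h, Equiv.swap_apply_left]
    rw [← hpre, (mp_swp n u v).measure_preimage
      (hA.inter (measurableSet_cyl n _)).nullMeasurableSet]
  have hrestrict : mu.restrict A = (mu A) • mu := by
    have hfin1 : IsFiniteMeasure (mu.restrict A) := inferInstance
    have hfin2 : IsFiniteMeasure ((mu A) • mu) := by
      constructor
      rw [Measure.smul_apply, smul_eq_mul, measure_univ, mul_one]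
      exact (prob_le_one (μ := mu) (s := A)).trans_lt ENNReal.one_lt_top
    refine ext_of_generate_finite (cylSet 0) (pi_eq_generateFrom_cylSet 0)
      (isPiSystem_cylSet 0) ?_ ?_
    · rintro s ⟨n, c, -, rfl⟩
      rw [Measure.restrict_apply (measurableSet_cyl n c), Set.inter_comm,
        Measure.smul_apply, smul_eq_mul, mu_cyl]
      have hcylc : cyl n c = cyl n (ext0 n (res n c)) := cyl_congr (resEq_ext0_res n c)
      rw [hcylc]
      -- all fibers have the same intersection measure with A
      have hconst : ∀ u : Pre n, mu (A ∩ cyl n (ext0 n u))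
          = mu (A ∩ cyl n (ext0 n (res n c))) := fun u => key n u (res n c)
      have hsum := sum_fibers A hA n
      rw [tsum_congr hconst, tsum_eq_sum (s := Finset.univ) (by simp), Finset.sum_const,
        nsmul_eq_mul, Finset.card_univ, card_Pre] at hsum
      have hW0 : ((W n : ℝ≥0∞)) ≠ 0 := by
        simp only [ne_eq, Nat.cast_eq_zero]
        exact (W_pos n).ne'
      have hWtop : ((W n : ℝ≥0∞)) ≠ ⊤ := ENNReal.natCast_ne_top _
      calc mu (A ∩ cyl n (ext0 n (res n c)))
          = (W n : ℝ≥0∞)⁻¹ * ((W n : ℝ≥0∞) * mu (A ∩ cyl n (ext0 n (res n c)))) := by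
            rw [← mul_assoc, ENNReal.inv_mul_cancel hW0 hWtop, one_mul]
        _ = (W n : ℝ≥0∞)⁻¹ * mu A := by rw [hsum]
        _ = mu A * (W n : ℝ≥0∞)⁻¹ := mul_comm _ _
    · rw [Measure.restrict_apply_univ, Measure.smul_apply, smul_eq_mul, measure_univ, mul_one]
  have hAA : mu A = mu A * mu A := by
    have h1 : mu.restrict A A = mu A := Measure.restrict_apply_self mu A
    rw [hrestrict, Measure.smul_apply, smul_eq_mul] at h1
    exact h1.symm
  rcases eq_or_ne (mu A) 0 with h0 | h0
  · exact Or.inl h0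
  · right
    have hle : mu A ≤ 1 := prob_le_one (μ := mu) (s := A)
    have hne : mu A ≠ ⊤ := (hle.trans_lt ENNReal.one_lt_top).ne
    have := hAA.symm
    calc mu A = mu A * mu A * (mu A)⁻¹ := by
          rw [mul_assoc, ENNReal.mul_inv_cancel h0 hne, mul_one]
      _ = mu A * (mu A)⁻¹ := by rw [← hAA]
      _ = 1 := ENNReal.mul_inv_cancel h0 hne

/-! ## Null sets -/

lemma mu_singleton (x : XX) : mu {x} = 0 := by
  have h1 : ∀ n : ℕ, mu {x} ≤ ((2 : ℝ≥0∞)⁻¹) ^ n := by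
    intro n
    have hsub : ({x} : Set XX) ⊆ cyl n x :=
      Set.singleton_subset_iff.2 (resEq_refl n x)
    calc mu {x} ≤ mu (cyl n x) := measure_mono hsub
      _ = (W n : ℝ≥0∞)⁻¹ := mu_cyl n x
      _ ≤ ((2^n : ℕ) : ℝ≥0∞)⁻¹ := by
          rw [ENNReal.inv_le_inv]
          exact_mod_cast two_pow_le_W n
      _ = ((2 : ℝ≥0∞)⁻¹) ^ n := by
          rw [← ENNReal.inv_pow]
          push_cast
          rfl
  refine le_antisymm ?_ (zero_le)
  refine ge_of_tendsto' (ENNReal.tendsto_pow_atTop_nhds_zero_of_lt_one ?_) h1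
  norm_num

instance : NullSingletonClass mu := ⟨mu_singleton⟩

lemma tailClass_countable (c : XX) : {x | tailEq x c}.Countable := by
  have : {x | tailEq x c} = ⋃ n : ℕ, {x | ∀ k, n ≤ k → x k = c k} := by
    ext x
    simp only [Set.mem_setOf_eq, Set.mem_iUnion, tailEq]
  rw [this]
  refine Set.countable_iUnion fun n => ?_
  refine Set.Countable.mono ?_ (Set.countable_range (fun p : Pre n => glue n p c))
  intro x hx
  refine ⟨res n x, ?_⟩
  show glue n (res n x) c = x
  funext k
  by_cases h : k < n
  · simp [glue, res, h]
  · rw [glue_tail n _ c k (by omega)]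
    exact (hx k (by omega)).symm


/-! ## The group homomorphisms -/

lemma SInf_bound (σ : ↥SInf) : ∃ m, ∀ j, m ≤ j → σ.1 j = j := by
  have hfin : {n | σ.1 n ≠ n}.Finite := σ.2
  obtain ⟨M, hM⟩ := hfin.bddAbove
  refine ⟨M + 1, fun j hj => not_not.1 fun hne => ?_⟩
  have : j ≤ M := hM (Set.mem_setOf.2 hne)
  omega

noncomputable def aHom : ↥SInf →* Equiv.Perm XX where
  toFun σ :=
    { toFun := act σ.1
      invFun := act σ.1⁻¹
      left_inv := fun x => act_inv (SInf_bound σ) x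
      right_inv := fun x => by
        have h := act_inv (bound_inv (SInf_bound σ)) x
        rwa [inv_inv] at h }
  map_one' := Equiv.ext fun x => act_one x
  map_mul' σ τ := Equiv.ext fun x => by
    show act ((σ * τ).1) x = act σ.1 (act τ.1 x)
    have hcoe : (σ * τ).1 = σ.1 * τ.1 := rfl
    rw [hcoe]
    exact act_mul (SInf_bound τ) (SInf_bound σ) x

lemma aHom_apply (σ : ↥SInf) (x : XX) : aHom σ x = act σ.1 x := rfl

noncomputable def bHom : Multiplicative ℤ →* Equiv.Perm XX := zpowersHom _ T

lemma bHom_apply (z : Multiplicative ℤ) : bHom z = T ^ (z.toAdd) := rfl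

/-! ## Properties of the two actions -/

lemma pmp_a : IsPMPAction mu aHom := fun σ => mp_act (SInf_bound σ).choose_spec

lemma free_a : IsFreeAction mu aHom := by
  intro σ hσ
  have hempty : {x : XX | aHom σ x = x} = ∅ := by
    rw [Set.eq_empty_iff_forall_notMem]
    intro x hx
    have h1 : σ.1 = 1 := act_eq_self_iff (SInf_bound σ) x hx
    exact hσ (Subtype.ext h1)
  rw [hempty]
  exact measure_empty

lemma erg_a : IsErgodicAction mu aHom := by
  intro A hA hinv
  refine ergodic_of_tailSaturated hA ?_
  intro x hx y hxy
  obtain ⟨σ, hfin, hb, hact⟩ := exists_act_of_tailEq hxy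
  have hσA := hinv ⟨σ, hfin⟩
  have hxpre : x ∈ (aHom ⟨σ, hfin⟩) ⁻¹' A := hσA.symm ▸ hx
  have : aHom ⟨σ, hfin⟩ x ∈ A := hxpre
  rwa [aHom_apply, hact] at this

lemma pmp_b : IsPMPAction mu bHom := by
  intro z
  rw [bHom_apply]
  exact mp_T_zpow _

lemma free_b : IsFreeAction mu bHom := by
  intro z hz
  have hzne : z.toAdd ≠ 0 := by
    intro h0
    apply hz
    have : z = Multiplicative.ofAdd (0 : ℤ) := by
      rw [← h0]
      rfl
    rw [this]
    rfl
  have hempty : {x : XX | bHom z x = x} = ∅ := by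
    rw [Set.eq_empty_iff_forall_notMem]
    intro x hx
    have hx' : (T ^ z.toAdd) x = x := hx
    rcases lt_trichotomy z.toAdd 0 with hneg | h0 | hpos
    · set m := (-z.toAdd).toNat with hm
      have hmpos : 0 < m := by omega
      have hzm : z.toAdd = -(m : ℤ) := by omega
      rw [hzm, zpow_neg, zpow_natCast] at hx'
      have h2 : (T ^ m) x = x := by
        have h3 := congrArg (T ^ m) hx'
        rw [show (T ^ m) ((T ^ m)⁻¹ x) = x from Equiv.apply_symm_apply _ _] at h3
        exact h3.symm
      rw [T_pow_apply] at h2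
      exact succX_iterate_ne hmpos x h2
    · exact hzne h0
    · set m := z.toAdd.toNat with hm
      have hmpos : 0 < m := by omega
      have hzm : z.toAdd = (m : ℤ) := by omega
      rw [hzm, zpow_natCast, T_pow_apply] at hx'
      exact succX_iterate_ne hmpos x hx'
  rw [hempty]
  exact measure_empty

lemma erg_b : IsErgodicAction mu bHom := by
  intro A hA hinv
  refine ergodic_of_tailSaturated hA ?_
  intro x hx y hxy
  obtain ⟨z, hz⟩ := exists_zpow_of_tailEq hxy
  have hzA := hinv (Multiplicative.ofAdd z)
  have hxpre : x ∈ (bHom (Multiplicative.ofAdd z)) ⁻¹' A := hzA.symm ▸ hx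
  have hmem : bHom (Multiplicative.ofAdd z) x ∈ A := hxpre
  have hco : bHom (Multiplicative.ofAdd z) x = (T ^ z) x := rfl
  rwa [hco, hz] at hmem

lemma orbits_eq : ∀ᵐ x ∂mu, orbitOf aHom x = orbitOf bHom x := by
  have hE : mu ({x | tailEq x allZero} ∪ {x | tailEq x allLast}) = 0 := by
    refine measure_union_null ?_ ?_ <;>
      exact Set.Countable.measure_zero (tailClass_countable _) mu
  rw [MeasureTheory.ae_iff]
  refine measure_mono_null ?_ hE
  intro x hx
  simp only [Set.mem_setOf_eq] at hx
  by_contra hxE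
  apply hx
  simp only [Set.mem_union, Set.mem_setOf_eq] at hxE
  push_neg at hxE
  obtain ⟨hZ, hL⟩ := hxE
  have horb_a : orbitOf aHom x = {y | tailEq x y} := by
    ext y
    constructor
    · rintro ⟨σ, rfl⟩
      exact act_tailEq (SInf_bound σ) x
    · intro hy
      obtain ⟨σ, hfin, hb, hact⟩ := exists_act_of_tailEq hy
      exact ⟨⟨σ, hfin⟩, hact⟩
  have horb_b : orbitOf bHom x = {y | tailEq x y} := by
    ext y
    constructor
    · rintro ⟨z, rfl⟩
      show tailEq x (bHom z x)
      have hco : bHom z x = (T ^ z.toAdd) x := rfl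
      rw [hco]
      exact tailEq_T_zpow hL hZ z.toAdd
    · intro hy
      obtain ⟨z, hz⟩ := exists_zpow_of_tailEq hy
      exact ⟨Multiplicative.ofAdd z, hz⟩
  rw [horb_a, horb_b]

end OE

/-- The finitary permutation group of ℕ and ℤ are orbit equivalent. -/
theorem sInf_orbitEquivalent_int : AreOrbitEquivalent ↥SInf (Multiplicative ℤ) := by
  refine ⟨OE.XX, inferInstance, OE.mu, inferInstance, inferInstance,
    OE.aHom, OE.bHom, OE.pmp_a, OE.free_a, OE.erg_a, OE.pmp_b, OE.free_b, OE.erg_b,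
    OE.orbits_eq⟩
end

section
/- Being an ICC group is not an orbit equivalence invariant: there exist countably infinite groups Γ₀ and Λ₀ such that Γ₀ is ICC, Λ₀ is abelian (hence not ICC), and Γ₀ and Λ₀ are orbit equivalent, i.e., they admit free, ergodic, probability-measure-preserving actions on a common standard Borel probability space whose orbits agree almost everywhere. -/
open MeasureTheory

/-- A group is abelian if its multiplication is commutative. -/
def IsAbelianGroup (G : Type*) [Group G] : Prop :=
  ∀ x y : G, x * y = y * x

noncomputable section OE

abbrev XX : Type := Π n : ℕ, ZMod (n + 1)
abbrev Qp (N : ℕ) : Type := Π k : Fin N, ZMod (k.1 + 1)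

def cyl (N : ℕ) (c : XX) : Set XX := {x | ∀ n < N, x n = c n}

def Cyls : Set (Set XX) := {S | ∃ N c, S = cyl N c}

def extQ {N : ℕ} (p : Qp N) : XX := fun n => if h : n < N then p ⟨n, h⟩ else 0

def resQ (N : ℕ) (x : XX) : Qp N := fun k => x k.1

lemma extQ_lt {N : ℕ} (p : Qp N) {n : ℕ} (h : n < N) : extQ p n = p ⟨n, h⟩ := dif_pos h

lemma extQ_ge {N : ℕ} (p : Qp N) {n : ℕ} (h : N ≤ n) : extQ p n = 0 := dif_neg (by omega)

lemma mem_cyl_extQ {N : ℕ} {x : XX} {p : Qp N} : x ∈ cyl N (extQ p) ↔ resQ N x = p := by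
  constructor
  · intro hx; funext k; have := hx k.1 k.2; rw [extQ_lt p k.2] at this; simpa [resQ] using this
  · rintro rfl; intro n hn; rw [extQ_lt _ hn]; rfl

lemma cyl_eq_ext (N : ℕ) (c : XX) : cyl N c = cyl N (extQ (resQ N c)) := by
  ext x; constructor <;> intro hx n hn <;> have := hx n hn <;>
    simp only [extQ_lt _ hn] at * <;> simpa [resQ] using this

lemma measurableSet_cyl {N : ℕ} {c : XX} : MeasurableSet (cyl N c) := by
  have : cyl N c = ⋂ n ∈ Set.Iio N, (fun x : XX => x n) ⁻¹' {c n} := by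
    ext x; simp [cyl]
  rw [this]
  exact MeasurableSet.biInter (Set.to_countable _)
    (fun n _ => (measurable_pi_apply n) (MeasurableSet.singleton _))

lemma isPiSystem_Cyls : IsPiSystem Cyls := by
  rintro S ⟨N, c, rfl⟩ T ⟨M, d, rfl⟩ ⟨z, hzc, hzd⟩
  refine ⟨max N M, z, ?_⟩
  ext x
  constructor
  · rintro ⟨h1, h2⟩ n hn
    rcases Nat.lt_or_ge n N with h | h
    · rw [h1 n h, hzc n h]
    · have hm : n < M := by omega
      rw [h2 n hm, hzd n hm]
  · intro h
    constructor
    · intro n hn; rw [h n (by omega), ← hzc n hn]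
    · intro n hn; rw [h n (by omega), ← hzd n hn]

lemma generateFrom_Cyls : (inferInstance : MeasurableSpace XX) = MeasurableSpace.generateFrom Cyls := by
  apply le_antisymm
  · rw [show (inferInstance : MeasurableSpace XX) = MeasurableSpace.pi from rfl, MeasurableSpace.pi]
    refine iSup_le fun n => ?_
    rw [MeasurableSpace.comap_le_iff_le_map]
    intro s _
    rw [MeasurableSpace.map_def]
    have : (fun x : XX => x n) ⁻¹' s = ⋃ v ∈ s, (fun x : XX => x n) ⁻¹' {v} := by
      ext x; simp
    rw [this]
    refine MeasurableSet.biUnion (Set.to_countable _) fun v _ => ?_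
    have : (fun x : XX => x n) ⁻¹' {v}
        = ⋃ p ∈ {p : Qp (n+1) | p ⟨n, n.lt_succ_self⟩ = v}, cyl (n+1) (extQ p) := by
      ext x
      simp only [Set.mem_preimage, Set.mem_singleton_iff, Set.mem_iUnion]
      constructor
      · intro hv
        exact ⟨resQ (n+1) x, hv, mem_cyl_extQ.2 rfl⟩
      · rintro ⟨p, hp, hx⟩
        have := mem_cyl_extQ.1 hx
        subst this
        exact hp
    rw [this]
    exact MeasurableSet.biUnion (Set.to_countable _)
      (fun p _ => MeasurableSpace.measurableSet_generateFrom ⟨n+1, extQ p, rfl⟩)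
  · refine MeasurableSpace.generateFrom_le ?_
    rintro S ⟨N, c, rfl⟩
    exact measurableSet_cyl

def mu : Measure XX := Measure.addHaarMeasure ⊤

instance : IsProbabilityMeasure mu := by
  constructor
  simpa [mu] using Measure.addHaarMeasure_self (K₀ := (⊤ : TopologicalSpace.PositiveCompacts XX))

instance : mu.IsAddLeftInvariant := Measure.isAddLeftInvariant_addHaarMeasure ⊤

lemma cyl_preimage_add (s : XX) (N : ℕ) (c : XX) :
    (fun x => s + x) ⁻¹' cyl N c = cyl N (c - s) := by
  ext x
  simp only [Set.mem_preimage, cyl, Set.mem_setOf_eq, Pi.add_apply, Pi.sub_apply]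
  constructor
  · intro h n hn; rw [← h n hn]; ring
  · intro h n hn; rw [h n hn]; ring

lemma mu_cyl_eq (N : ℕ) (c c' : XX) : mu (cyl N c) = mu (cyl N c') := by
  have := measure_preimage_add mu (c - c') (cyl N c)
  rw [cyl_preimage_add] at this
  rw [← this, sub_sub_cancel]

lemma cyl_disjoint {N : ℕ} {p q : Qp N} (h : p ≠ q) :
    Disjoint (cyl N (extQ p)) (cyl N (extQ q)) := by
  rw [Set.disjoint_iff_inter_eq_empty]
  ext x
  simp only [Set.mem_inter_iff, Set.mem_empty_iff_false, iff_false, not_and]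
  intro h1 h2
  exact h ((mem_cyl_extQ.1 h1).symm.trans (mem_cyl_extQ.1 h2))

lemma cyl_cover (N : ℕ) : (⋃ p : Qp N, cyl N (extQ p)) = Set.univ := by
  ext x
  simp only [Set.mem_iUnion, Set.mem_univ, iff_true]
  exact ⟨resQ N x, mem_cyl_extQ.2 rfl⟩

lemma card_mul_mu_cyl (N : ℕ) (c : XX) :
    (Fintype.card (Qp N) : ENNReal) * mu (cyl N c) = 1 := by
  have h1 : mu (⋃ p : Qp N, cyl N (extQ p)) = ∑' p : Qp N, mu (cyl N (extQ p)) :=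
    measure_iUnion (fun p q hpq => cyl_disjoint hpq) (fun p => measurableSet_cyl)
  rw [cyl_cover, tsum_fintype] at h1
  have h2 : ∀ p : Qp N, mu (cyl N (extQ p)) = mu (cyl N c) := fun p => mu_cyl_eq N _ c
  rw [Finset.sum_congr rfl (fun p _ => h2 p), Finset.sum_const, Finset.card_univ,
    nsmul_eq_mul] at h1
  rw [← h1, measure_univ]

section LocalPerm

variable (π : Equiv.Perm XX) (m : ℕ)
variable (h1 : ∀ x n, m ≤ n → π x n = x n)
variable (h2 : ∀ x y : XX, (∀ n < m, x n = y n) → ∀ n < m, π x n = π y n)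

include h1 h2

lemma local_agree {M : ℕ} (hM : m ≤ M) (x y : XX) (hxy : ∀ n < M, x n = y n) :
    ∀ n < M, π x n = π y n := by
  intro n hn
  rcases Nat.lt_or_ge n m with h | h
  · exact h2 x y (fun k hk => hxy k (by omega)) n h
  · rw [h1 x n h, h1 y n h]; exact hxy n hn

lemma local_measurable : Measurable π := by
  apply measurable_pi_lambda
  intro n
  have key : (fun x : XX => π x n) = (fun p : Qp (max m (n+1)) => π (extQ p) n) ∘ (resQ (max m (n+1))) := by
    funext x
    have : ∀ k < max m (n+1), x k = extQ (resQ (max m (n+1)) x) k := by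
      intro k hk; rw [extQ_lt _ hk]; rfl
    exact (local_agree π m h1 h2 (le_max_left _ _) x _ this n (by omega))
  rw [key]
  exact (Measurable.of_discrete).comp (measurable_pi_lambda _ (fun k => measurable_pi_apply _))

lemma local_ext_zero {M : ℕ} (hM : m ≤ M) (p : Qp M) {n : ℕ} (hn : M ≤ n) :
    π (extQ p) n = 0 := by rw [h1 _ n (le_trans hM hn)]; exact extQ_ge p hn

/-- the induced prefix map -/
lemma local_prefix_bij {M : ℕ} (hM : m ≤ M) :
    Function.Bijective (fun p : Qp M => resQ M (π (extQ p))) := by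
  rw [Fintype.bijective_iff_injective_and_card]
  refine ⟨?_, rfl⟩
  intro p q hpq
  have hfull : π (extQ p) = π (extQ q) := by
    funext n
    rcases Nat.lt_or_ge n M with h | h
    · have := congrFun hpq ⟨n, h⟩; simpa [resQ] using this
    · rw [local_ext_zero π m h1 h2 hM p h, local_ext_zero π m h1 h2 hM q h]
  have := π.injective hfull
  funext k
  have := congrFun this k.1
  simp only [extQ] at this
  rw [dif_pos k.2, dif_pos k.2] at this
  exact this

lemma local_preimage_cyl {M : ℕ} (hM : m ≤ M) (q : Qp M) :
    π ⁻¹' cyl M (extQ q) = cyl M (extQ ((Equiv.ofBijective _ (local_prefix_bij π m h1 h2 hM)).symm q)) := by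
  set T := Equiv.ofBijective _ (local_prefix_bij π m h1 h2 hM) with hT
  ext x
  simp only [Set.mem_preimage]
  rw [mem_cyl_extQ, mem_cyl_extQ]
  have key : resQ M (π x) = T (resQ M x) := by
    have : ∀ n < M, π x n = π (extQ (resQ M x)) n := by
      refine local_agree π m h1 h2 hM x _ ?_
      intro k hk; rw [extQ_lt _ hk]; rfl
    funext k
    have := this k.1 k.2
    simp only [resQ, hT, Equiv.ofBijective_apply]
    exact this
  rw [key]
  constructor
  · intro h; rw [← h, Equiv.symm_apply_apply]
  · intro h; rw [h, Equiv.apply_symm_apply]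

lemma local_measurePreserving : MeasurePreserving π mu mu := by
  have hmeas := local_measurable π m h1 h2
  refine ⟨hmeas, ?_⟩
  haveI : IsProbabilityMeasure (Measure.map π mu) :=
    Measure.isProbabilityMeasure_map hmeas.aemeasurable
  refine ext_of_generate_finite Cyls generateFrom_Cyls isPiSystem_Cyls ?_ (by simp)
  rintro S ⟨N, c, rfl⟩
  rw [Measure.map_apply hmeas measurableSet_cyl]
  -- enlarge the level to M := max N m
  set M := max N m with hM
  -- write cyl N c as a union over extensions
  classical
  have decomp : ∀ (B : Set XX), (∀ x y : XX, (∀ n < M, x n = y n) → (x ∈ B ↔ y ∈ B)) →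
      B = ⋃ p ∈ Finset.univ.filter (fun p : Qp M => extQ p ∈ B), cyl M (extQ p) := by
    intro B hB
    ext x
    simp only [Set.mem_iUnion, Finset.mem_filter, Finset.mem_univ, true_and]
    constructor
    · intro hx
      refine ⟨resQ M x, ?_, mem_cyl_extQ.2 rfl⟩
      rw [← hB x (extQ (resQ M x)) (fun n hn => by rw [extQ_lt _ hn]; rfl)]
      exact hx
    · rintro ⟨p, hp, hxp⟩
      have := mem_cyl_extQ.1 hxp
      subst this
      rw [hB x (extQ (resQ M x)) (fun n hn => by rw [extQ_lt _ hn]; rfl)]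
      exact hp
  have hcylN : ∀ x y : XX, (∀ n < M, x n = y n) → (x ∈ cyl N c ↔ y ∈ cyl N c) := by
    intro x y hxy
    constructor <;> intro h n hn
    · rw [← hxy n (by omega)]; exact h n hn
    · rw [hxy n (by omega)]; exact h n hn
  have hpre : ∀ x y : XX, (∀ n < M, x n = y n) → (x ∈ π ⁻¹' cyl N c ↔ y ∈ π ⁻¹' cyl N c) := by
    intro x y hxy
    have := local_agree π m h1 h2 (le_max_right N m) x y hxy
    simp only [Set.mem_preimage]
    exact hcylN _ _ this
  have e1 := decomp _ hcylN
  have e2 := decomp _ hpre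
  have meq : ∀ (F : Finset (Qp M)),
      mu (⋃ p ∈ F, cyl M (extQ p)) = F.card * mu (cyl M c) := by
    intro F
    rw [measure_biUnion_finset (fun p _ q _ hpq => cyl_disjoint hpq) (fun p _ => measurableSet_cyl)]
    rw [Finset.sum_congr rfl (fun p _ => mu_cyl_eq M (extQ p) c), Finset.sum_const, nsmul_eq_mul]
  conv_lhs => rw [e2]
  conv_rhs => rw [e1]
  rw [meq, meq]
  congr 2
  -- cardinalities agree via the prefix bijection
  set T := Equiv.ofBijective _ (local_prefix_bij π m h1 h2 (le_max_right N m))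
  apply Finset.card_bij (fun p _ => T p)
  · intro p hp
    simp only [Finset.mem_filter, Finset.mem_univ, true_and] at hp ⊢
    -- T p = resQ M (π (extQ p)); π (extQ p) ∈ cyl N c; need extQ (T p) ∈ cyl N c
    have hpc : π (extQ p) ∈ cyl N c := hp
    have : ∀ n < M, extQ (T p : Qp M) n = π (extQ p) n := by
      intro n hn
      rw [extQ_lt _ hn]
      rfl
    rw [← hcylN _ _ (fun n hn => (this n hn).symm)]
    exact hpc
  · intro p hp q hq hpq
    exact T.injective hpq
  · intro q hq
    refine ⟨T.symm q, ?_, by simp⟩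
    simp only [Finset.mem_filter, Finset.mem_univ, true_and] at hq ⊢
    -- hq : extQ q ∈ cyl N c ; need : π (extQ (T.symm q)) ∈ cyl N c
    have hTq : resQ M (π (extQ (T.symm q : Qp M))) = q := by
      have := T.apply_symm_apply q
      exact this
    have hthis : ∀ n < M, π (extQ (T.symm q : Qp M)) n = extQ q n := by
      intro n hn
      rw [extQ_lt _ hn]
      conv_rhs => rw [← hTq]
      rfl
    simp only [Set.mem_preimage]
    rw [hcylN _ _ hthis]
    exact hq

end LocalPerm

lemma ergodic_core (A : Set XX) (hA : MeasurableSet A)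
    (hinv : ∀ s : XX, (∃ M, ∀ n, M ≤ n → s n = 0) → (fun x => s + x) ⁻¹' A = A) :
    mu A = 0 ∨ mu A = 1 := by
  classical
  -- step 1 : μ (A ∩ cyl N c) = μ A * μ (cyl N c) for every cylinder
  have key : ∀ (N : ℕ) (c : XX), mu (A ∩ cyl N c) = mu A * mu (cyl N c) := by
    intro N c
    have heq : ∀ p q : Qp N, mu (A ∩ cyl N (extQ p)) = mu (A ∩ cyl N (extQ q)) := by
      intro p q
      set s : XX := extQ q - extQ p with hs
      have hsupp : ∃ M, ∀ n, M ≤ n → s n = 0 := by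
        refine ⟨N, fun n hn => ?_⟩
        simp [hs, extQ_ge p hn, extQ_ge q hn]
      have hpre : (fun x => s + x) ⁻¹' (A ∩ cyl N (extQ q)) = A ∩ cyl N (extQ p) := by
        rw [Set.preimage_inter, hinv s hsupp, cyl_preimage_add]
        have : extQ q - s = extQ p := by rw [hs, sub_sub_cancel]
        rw [this]
      calc mu (A ∩ cyl N (extQ p)) = mu ((fun x => s + x) ⁻¹' (A ∩ cyl N (extQ q))) := by
            rw [hpre]
        _ = mu (A ∩ cyl N (extQ q)) := measure_preimage_add mu s _
    -- A = union of A ∩ cyl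
    have hcover : A = ⋃ p : Qp N, A ∩ cyl N (extQ p) := by
      rw [← Set.inter_iUnion, cyl_cover, Set.inter_univ]
    have hsum : mu A = ∑ p : Qp N, mu (A ∩ cyl N (extQ p)) := by
      conv_lhs => rw [hcover]
      rw [measure_iUnion (fun p q hpq => ((cyl_disjoint hpq).mono
        Set.inter_subset_right Set.inter_subset_right))
        (fun p => hA.inter measurableSet_cyl), tsum_fintype]
    set p0 := resQ N c with hp0
    have hall : ∀ p : Qp N, mu (A ∩ cyl N (extQ p)) = mu (A ∩ cyl N c) := by
      intro p
      rw [heq p p0, ← cyl_eq_ext]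
    rw [Finset.sum_congr rfl (fun p _ => hall p), Finset.sum_const, Finset.card_univ,
      nsmul_eq_mul] at hsum
    -- now : mu A = card * mu (A ∩ cyl N c), and card * mu (cyl N c) = 1
    have hcard := card_mul_mu_cyl N c
    calc mu (A ∩ cyl N c) = mu (A ∩ cyl N c) * ((Fintype.card (Qp N) : ENNReal) * mu (cyl N c)) := by
          rw [hcard, mul_one]
      _ = ((Fintype.card (Qp N) : ENNReal) * mu (A ∩ cyl N c)) * mu (cyl N c) := by ring
      _ = mu A * mu (cyl N c) := by rw [← hsum]
  -- step 2 : restrict A = (mu A) • mu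
  have hExt : mu.restrict A = (mu A) • mu := by
    refine ext_of_generate_finite Cyls generateFrom_Cyls isPiSystem_Cyls ?_ ?_
    · rintro S ⟨N, c, rfl⟩
      rw [Measure.restrict_apply measurableSet_cyl, Set.inter_comm, key N c]
      simp
    · rw [Measure.restrict_apply_univ]
      simp
  have hAA := congrArg (fun ν : Measure XX => ν A) hExt
  simp only [Measure.restrict_apply hA, Set.inter_self, Measure.smul_apply, smul_eq_mul] at hAA
  -- mu A = mu A * mu A
  rcases eq_or_ne (mu A) 0 with h0 | h0
  · exact Or.inl h0
  · right
    have hfin : mu A ≠ ⊤ := measure_ne_top mu A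
    have := hAA
    nth_rewrite 1 [← mul_one (mu A)] at this
    exact ((ENNReal.mul_right_inj h0 hfin).1 this).symm

/-! ### The group of finitary permutations of ℕ -/

def FinPerm : Subgroup (Equiv.Perm ℕ) where
  carrier := {σ | ∃ m, ∀ k, m ≤ k → σ k = k}
  one_mem' := ⟨0, fun _ _ => rfl⟩
  mul_mem' := by
    rintro σ τ ⟨m, hm⟩ ⟨n, hn⟩
    exact ⟨max m n, fun k hk => by
      rw [Equiv.Perm.mul_apply, hn k (le_trans (le_max_right m n) hk),
        hm k (le_trans (le_max_left m n) hk)]⟩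
  inv_mem' := by
    rintro σ ⟨m, hm⟩
    exact ⟨m, fun k hk => by
      conv_lhs => rw [← hm k hk]
      exact Equiv.symm_apply_apply σ k⟩

abbrev Γt : Type := ↥FinPerm

def lvl (g : Γt) : ℕ := Classical.choose g.2

lemma lvl_spec (g : Γt) : ∀ k, lvl g ≤ k → (g : Equiv.Perm ℕ) k = k :=
  Classical.choose_spec g.2

lemma lvl_spec_inv (g : Γt) : ∀ k, lvl g ≤ k → (g : Equiv.Perm ℕ)⁻¹ k = k := by
  intro k hk
  conv_lhs => rw [← lvl_spec g k hk]
  exact Equiv.symm_apply_apply _ k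

instance : Countable Γt := by
  have hc : ∀ m : ℕ, Set.Countable {σ : Equiv.Perm ℕ | ∀ k, m ≤ k → σ k = k} := by
    intro m
    rw [← Set.countable_coe_iff]
    refine Function.Injective.countable
      (f := fun σ : {σ : Equiv.Perm ℕ | ∀ k, m ≤ k → σ k = k} => (fun i : Fin m => σ.1 i.1)) ?_
    rintro ⟨σ, hσ⟩ ⟨τ, hτ⟩ h
    ext1
    ext k
    rcases Nat.lt_or_ge k m with hk | hk
    · exact congrFun h ⟨k, hk⟩
    · rw [hσ k hk, hτ k hk]
  have : Set.Countable {σ : Equiv.Perm ℕ | ∃ m, ∀ k, m ≤ k → σ k = k} := by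
    have : {σ : Equiv.Perm ℕ | ∃ m, ∀ k, m ≤ k → σ k = k}
        = ⋃ m : ℕ, {σ : Equiv.Perm ℕ | ∀ k, m ≤ k → σ k = k} := by
      ext σ; simp [Set.mem_iUnion]
    rw [this]
    exact Set.countable_iUnion hc
  haveI := this.to_subtype
  exact Function.Injective.countable
    (f := fun g : Γt => (⟨g.1, g.2⟩ : {σ : Equiv.Perm ℕ | ∃ m, ∀ k, m ≤ k → σ k = k}))
    (fun g h hgh => Subtype.ext (congrArg Subtype.val hgh))

instance : Infinite Γt := by
  refine Infinite.of_injective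
    (fun n : ℕ => (⟨Equiv.swap 0 (n+1), ⟨n+2, fun k hk => Equiv.swap_apply_of_ne_of_ne
      (by omega) (by omega)⟩⟩ : Γt)) ?_
  intro n m hnm
  have h1 := congrArg (fun g : Γt => (g : Equiv.Perm ℕ) 0) hnm
  simp only [Equiv.swap_apply_left] at h1
  omega

lemma finperm_icc (g : Γt) (hg : g ≠ 1) :
    (Set.range fun h : Γt => h * g * h⁻¹).Infinite := by
  have hex : ∃ a, (g : Equiv.Perm ℕ) a ≠ a := by
    by_contra hcon
    push_neg at hcon
    exact hg (Subtype.ext (Equiv.ext hcon))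
  obtain ⟨a, ha⟩ := hex
  obtain ⟨b, hb⟩ : ∃ b, (g : Equiv.Perm ℕ) a = b := ⟨_, rfl⟩
  rw [hb] at ha
  obtain ⟨B, hBa, hBb, hBl⟩ : ∃ B, a < B ∧ b < B ∧ lvl g ≤ B :=
    ⟨max (max a b) (lvl g) + 1, by omega, by omega, by omega⟩
  have hswap : ∀ c : ℕ, Equiv.swap a c ∈ FinPerm := by
    intro c
    exact ⟨max a c + 1, fun k hk => Equiv.swap_apply_of_ne_of_ne (by omega) (by omega)⟩
  set H : ℕ → Γt := fun i => ⟨Equiv.swap a (B + i), hswap (B + i)⟩ with hH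
  refine Set.infinite_of_injective_forall_mem
    (f := fun i : ℕ => H i * g * (H i)⁻¹) ?_ (fun i => ⟨H i, rfl⟩)
  intro i j hij
  by_contra hne
  have hij' : H i * g * (H i)⁻¹ = H j * g * (H j)⁻¹ := hij
  have hlhs : ((H i * g * (H i)⁻¹ : Γt) : Equiv.Perm ℕ) (B + i) = b := by
    simp only [Subgroup.coe_mul, Subgroup.coe_inv, Equiv.Perm.mul_apply, hH]
    rw [Equiv.swap_inv, Equiv.swap_apply_right, hb,
      Equiv.swap_apply_of_ne_of_ne (by omega) (by omega)]
  have hrhs : ((H j * g * (H j)⁻¹ : Γt) : Equiv.Perm ℕ) (B + i) = B + i := by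
    simp only [Subgroup.coe_mul, Subgroup.coe_inv, Equiv.Perm.mul_apply, hH]
    have hswapji : (Equiv.swap a (B + j)) (B + i) = B + i :=
      Equiv.swap_apply_of_ne_of_ne (by omega) (fun h => hne (by omega))
    rw [Equiv.swap_inv, hswapji, lvl_spec g (B + i) (by omega), hswapji]
  rw [hij', hrhs] at hlhs
  omega

/-! ### the odometer-type action of `Γt` on `XX` -/

def bld (x : XX) : ℕ → Equiv.Perm ℕ
  | 0 => 1
  | (M+1) => bld x M * Equiv.swap ((x M).val) M

lemma val_le {M : ℕ} (v : ZMod (M+1)) : v.val ≤ M :=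
  Nat.lt_succ_iff.1 (ZMod.val_lt v)

lemma bld_fix (x : XX) : ∀ M k, M ≤ k → bld x M k = k := by
  intro M
  induction M with
  | zero => intro k _; rfl
  | succ M ih =>
      intro k hk
      have h1 : Equiv.swap ((x M).val) M k = k :=
        Equiv.swap_apply_of_ne_of_ne (by have := val_le (x M); omega) (by omega)
      rw [bld, Equiv.Perm.mul_apply, h1, ih k (by omega)]

lemma bld_fix_inv (x : XX) : ∀ M k, M ≤ k → (bld x M)⁻¹ k = k := by
  intro M k hk
  conv_lhs => rw [← bld_fix x M k hk]
  exact Equiv.symm_apply_apply _ _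

lemma bld_prefix {x y : XX} : ∀ {M}, (∀ n < M, x n = y n) → bld x M = bld y M := by
  intro M
  induction M with
  | zero => intro _; rfl
  | succ M ih =>
      intro h
      rw [bld, bld, ih (fun n hn => h n (by omega)), h M (by omega)]

lemma bld_top (x : XX) (M : ℕ) : (bld x (M+1))⁻¹ M = (x M).val := by
  rw [bld, mul_inv_rev, Equiv.Perm.mul_apply, Equiv.swap_inv,
    bld_fix_inv x M M le_rfl, Equiv.swap_apply_right]

lemma bld_inj {x y : XX} : ∀ {M}, bld x M = bld y M → ∀ n < M, x n = y n := by
  intro M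
  induction M with
  | zero => intro _ n hn; omega
  | succ M ih =>
      intro h n hn
      have htop : x M = y M := by
        have h1 := bld_top x M
        have h2 := bld_top y M
        rw [h] at h1
        have := h1.symm.trans h2
        exact ZMod.val_injective _ this
      rcases Nat.lt_or_ge n M with h' | h'
      · refine ih ?_ n h'
        have : bld x (M+1) * (Equiv.swap ((x M).val) M)⁻¹
            = bld y (M+1) * (Equiv.swap ((y M).val) M)⁻¹ := by rw [h, htop]
        rw [bld, bld, mul_inv_cancel_right, mul_inv_cancel_right] at this
        exact this
      · have : n = M := by omega
        rw [this, htop]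

lemma eq_of_bld_eq {M : ℕ} {y z : XX} (h1 : bld y M = bld z M)
    (h2 : ∀ n, M ≤ n → y n = z n) : y = z := by
  funext n
  rcases Nat.lt_or_ge n M with h | h
  · exact bld_inj h1 n h
  · exact h2 n h

lemma code_exists : ∀ (M : ℕ) (σ : Equiv.Perm ℕ), (∀ k, M ≤ k → σ k = k) →
    ∃ x : XX, bld x M = σ ∧ ∀ n, M ≤ n → x n = 0 := by
  intro M
  induction M with
  | zero =>
      intro σ h
      exact ⟨fun _ => 0, (Equiv.ext fun k => (h k (Nat.zero_le k)).symm : (1 : Equiv.Perm ℕ) = σ),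
        fun _ _ => rfl⟩
  | succ M ih =>
      intro σ h
      -- σ maps [0, M] into itself, so σ⁻¹ M ≤ M
      have hd : σ⁻¹ M ≤ M := by
        by_contra hcon
        push_neg at hcon
        have := h (σ⁻¹ M) (by omega)
        rw [show σ (σ⁻¹ M) = M from Equiv.apply_symm_apply σ M] at this
        omega
      set σ' := σ * Equiv.swap (σ⁻¹ M) M with hσ'
      have hfix' : ∀ k, M ≤ k → σ' k = k := by
        intro k hk
        rcases Nat.eq_or_lt_of_le hk with rfl | hlt
        · rw [hσ', Equiv.Perm.mul_apply, Equiv.swap_apply_right, show σ (σ⁻¹ M) = M from Equiv.apply_symm_apply σ M]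
        · rw [hσ', Equiv.Perm.mul_apply,
            Equiv.swap_apply_of_ne_of_ne (by omega) (by omega), h k (by omega)]
      obtain ⟨x', hx'1, hx'2⟩ := ih σ' hfix'
      refine ⟨Function.update x' M ((σ⁻¹ M : ℕ) : ZMod (M+1)), ?_, ?_⟩
      · rw [bld]
        have e1 : bld (Function.update x' M ((σ⁻¹ M : ℕ) : ZMod (M+1))) M = bld x' M :=
          bld_prefix (fun n hn => Function.update_of_ne (by omega) _ _)
        have e2 : (Function.update x' M ((σ⁻¹ M : ℕ) : ZMod (M+1)) M).val = σ⁻¹ M := by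
          rw [Function.update_self, ZMod.val_cast_of_lt (by omega)]
        rw [e1, e2, hx'1, hσ', mul_assoc, Equiv.swap_mul_self, mul_one]
      · intro n hn
        rw [Function.update_of_ne (by omega), hx'2 n (by omega)]

open Classical in
def codeOf (M : ℕ) (σ : Equiv.Perm ℕ) : XX :=
  if h : ∀ k, M ≤ k → σ k = k then (code_exists M σ h).choose else 0

lemma codeOf_spec {M : ℕ} {σ : Equiv.Perm ℕ} (h : ∀ k, M ≤ k → σ k = k) :
    bld (codeOf M σ) M = σ := by
  classical
  rw [codeOf]
  rw [dif_pos h]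
  exact (code_exists M σ h).choose_spec.1

lemma mul_bld_fix (g : Γt) (x : XX) {M : ℕ} (hM : lvl g ≤ M) :
    ∀ k, M ≤ k → ((g : Equiv.Perm ℕ) * bld x M) k = k := by
  intro k hk
  rw [Equiv.Perm.mul_apply, bld_fix x M k hk, lvl_spec g k (by omega)]

def actF (g : Γt) (x : XX) : XX :=
  fun n => if n < lvl g then codeOf (lvl g) ((g : Equiv.Perm ℕ) * bld x (lvl g)) n else x n

lemma actF_high (g : Γt) (x : XX) {n : ℕ} (hn : lvl g ≤ n) : actF g x n = x n :=
  if_neg (by omega)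

lemma actF_bld (g : Γt) (x : XX) : ∀ {N}, lvl g ≤ N →
    bld (actF g x) N = (g : Equiv.Perm ℕ) * bld x N := by
  intro N hN
  induction N, hN using Nat.le_induction with
  | base =>
      have : bld (actF g x) (lvl g)
          = bld (codeOf (lvl g) ((g : Equiv.Perm ℕ) * bld x (lvl g))) (lvl g) :=
        bld_prefix (fun n hn => if_pos hn)
      rw [this, codeOf_spec (mul_bld_fix g x le_rfl)]
  | succ N hN ih =>
      rw [bld, bld, ih, actF_high g x hN, mul_assoc]

lemma actF_char (g : Γt) (x y : XX) {M : ℕ} (hM : lvl g ≤ M)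
    (hhigh : ∀ n, M ≤ n → y n = x n)
    (hbld : bld y M = (g : Equiv.Perm ℕ) * bld x M) : actF g x = y := by
  refine eq_of_bld_eq (M := M) ?_ ?_
  · rw [actF_bld g x hM, hbld]
  · intro n hn
    rw [actF_high g x (by omega), hhigh n hn]

lemma actF_one (x : XX) : actF 1 x = x := by
  refine actF_char 1 x x le_rfl (fun _ _ => rfl) ?_
  rw [OneMemClass.coe_one, one_mul]

lemma actF_mul (g h : Γt) (x : XX) : actF (g * h) x = actF g (actF h x) := by
  obtain ⟨M, h1, h2, h3⟩ : ∃ M, lvl (g*h) ≤ M ∧ lvl g ≤ M ∧ lvl h ≤ M :=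
    ⟨max (max (lvl (g*h)) (lvl g)) (lvl h), by omega, by omega, by omega⟩
  refine actF_char (g*h) x (actF g (actF h x)) h1 ?_ ?_
  · intro n hn
    rw [actF_high g _ (by omega), actF_high h _ (by omega)]
  · rw [actF_bld g _ h2, actF_bld h _ h3, Subgroup.coe_mul, mul_assoc]

lemma actF_left_inv (g : Γt) (x : XX) : actF g⁻¹ (actF g x) = x := by
  rw [← actF_mul, inv_mul_cancel, actF_one]

def aGamma : Γt →* Equiv.Perm XX where
  toFun g := ⟨actF g, actF g⁻¹, actF_left_inv g, by
    intro x
    conv_rhs => rw [← actF_left_inv g⁻¹ x]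
    rw [inv_inv]⟩
  map_one' := by
    apply Equiv.ext
    intro x
    exact actF_one x
  map_mul' g h := by
    apply Equiv.ext
    intro x
    exact actF_mul g h x

lemma aGamma_apply (g : Γt) (x : XX) : aGamma g x = actF g x := rfl

lemma actF_free (g : Γt) (x : XX) (h : actF g x = x) : g = 1 := by
  have h1 := actF_bld g x (le_rfl : lvl g ≤ lvl g)
  rw [h] at h1
  have : (1 : Equiv.Perm ℕ) * bld x (lvl g) = (g : Equiv.Perm ℕ) * bld x (lvl g) := by
    rw [one_mul]; exact h1
  have := mul_right_cancel this
  exact Subtype.ext this.symm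

lemma actF_prefix (g : Γt) (x y : XX) (h : ∀ n < lvl g, x n = y n) :
    ∀ n < lvl g, actF g x n = actF g y n := by
  refine bld_inj ?_
  rw [actF_bld g x le_rfl, actF_bld g y le_rfl, bld_prefix h]

lemma orbit_flip (g : Γt) (x : XX) :
    ∃ s : XX, (∃ M, ∀ n, M ≤ n → s n = 0) ∧ (fun n => s n + x n) = actF g x := by
  refine ⟨fun n => actF g x n - x n, ⟨lvl g, fun n hn => ?_⟩, ?_⟩
  · simp only
    rw [actF_high g x hn, sub_self]
  · funext n; rw [sub_add_cancel]

lemma flip_orbit (s : XX) (M : ℕ) (hs : ∀ n, M ≤ n → s n = 0) (x : XX) :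
    ∃ g : Γt, actF g x = fun n => s n + x n := by
  set y : XX := fun n => s n + x n with hy
  have hyx : ∀ n, M ≤ n → y n = x n := by
    intro n hn; rw [hy]; simp only; rw [hs n hn, zero_add]
  have hmem : bld y M * (bld x M)⁻¹ ∈ FinPerm := by
    refine ⟨M, fun k hk => ?_⟩
    rw [Equiv.Perm.mul_apply, bld_fix_inv x M k hk, bld_fix y M k hk]
  set g : Γt := ⟨bld y M * (bld x M)⁻¹, hmem⟩ with hg
  obtain ⟨M', hM'1, hM'2⟩ : ∃ M', M ≤ M' ∧ lvl g ≤ M' := ⟨max M (lvl g), by omega, by omega⟩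
  have hbld : ∀ N, M ≤ N → bld y N = (g : Equiv.Perm ℕ) * bld x N := by
    intro N hN
    induction N, hN using Nat.le_induction with
    | base => rw [hg, inv_mul_cancel_right]
    | succ N hN ih =>
        rw [bld, bld, ih, hyx N (by omega), mul_assoc]
  refine ⟨g, actF_char g x y hM'2 (fun n hn => hyx n (by omega)) (hbld M' hM'1)⟩

/-! ### The abelian group -/

abbrev Λt : Type := Multiplicative (Π₀ n : ℕ, ZMod (n + 1))

instance : Infinite Λt := by
  refine Infinite.of_injective
    (fun n : ℕ => Multiplicative.ofAdd (DFinsupp.single (n+1) (1 : ZMod (n+1+1)))) ?_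
  intro n m hnm
  have h := congrArg Multiplicative.toAdd hnm
  simp only [toAdd_ofAdd] at h
  rcases (DFinsupp.single_eq_single_iff _ _ _ _).1 h with ⟨h1, _⟩ | ⟨h1, _⟩
  · omega
  · exfalso
    haveI : Fact (1 < n+1+1) := Fact.mk (by omega)
    have hv := congrArg ZMod.val h1
    simp only [ZMod.val_one, ZMod.val_zero] at hv
    omega

instance : Countable Λt :=
  Countable.of_equiv _ Multiplicative.ofAdd

lemma lambda_support_bound (s : Λt) : ∃ M, ∀ n, M ≤ n → (Multiplicative.toAdd s) n = 0 := by
  refine ⟨((Multiplicative.toAdd s).support.sup id) + 1, fun n hn => ?_⟩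
  rw [← DFinsupp.notMem_support_iff]
  intro hmem
  have := Finset.le_sup (f := id) hmem
  simp only [id] at this
  omega

def mkFlip (M : ℕ) (s : XX) : Λt :=
  Multiplicative.ofAdd (DFinsupp.mk (Finset.range M) (fun i => s i.1))

lemma mkFlip_apply (M : ℕ) (s : XX) (hs : ∀ n, M ≤ n → s n = 0) (n : ℕ) :
    (Multiplicative.toAdd (mkFlip M s)) n = s n := by
  rw [mkFlip, toAdd_ofAdd, DFinsupp.mk_apply]
  split_ifs with h
  · rfl
  · rw [hs n (by simpa using h)]

def bLambda : Λt →* Equiv.Perm XX where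
  toFun s := ⟨fun x n => (Multiplicative.toAdd s) n + x n,
    fun x n => -((Multiplicative.toAdd s) n) + x n,
    fun x => by funext n; simp,
    fun x => by funext n; simp⟩
  map_one' := by
    apply Equiv.ext
    intro x
    funext n
    simp
  map_mul' s t := by
    apply Equiv.ext
    intro x
    funext n
    simp [add_assoc]

lemma bLambda_apply (s : Λt) (x : XX) (n : ℕ) :
    bLambda s x n = (Multiplicative.toAdd s) n + x n := rfl

/-! ### Assembling the two actions -/

lemma orbit_eq (x : XX) : orbitOf aGamma x = orbitOf bLambda x := by
  ext y
  constructor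
  · rintro ⟨g, rfl⟩
    obtain ⟨s, ⟨M, hM⟩, hsx⟩ := orbit_flip g x
    refine ⟨mkFlip M s, ?_⟩
    show bLambda (mkFlip M s) x = aGamma g x
    funext n
    rw [bLambda_apply, mkFlip_apply M s hM n]
    exact congrFun hsx n
  · rintro ⟨s, rfl⟩
    obtain ⟨M, hM⟩ := lambda_support_bound s
    obtain ⟨g, hg⟩ := flip_orbit (fun n => (Multiplicative.toAdd s) n) M hM x
    exact ⟨g, hg⟩

lemma gamma_pmp : IsPMPAction mu aGamma := by
  intro g
  exact local_measurePreserving (aGamma g) (lvl g) (fun x n hn => actF_high g x hn)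
    (fun x y hxy n hn => actF_prefix g x y hxy n hn)

lemma lambda_pmp : IsPMPAction mu bLambda := by
  intro s
  obtain ⟨M, hM⟩ := lambda_support_bound s
  exact local_measurePreserving (bLambda s) M
    (fun x n hn => by rw [bLambda_apply, hM n hn, zero_add])
    (fun x y hxy n hn => by rw [bLambda_apply, bLambda_apply, hxy n hn])

lemma gamma_free : IsFreeAction mu aGamma := by
  intro g hg
  have : {x : XX | aGamma g x = x} = ∅ := by
    rw [Set.eq_empty_iff_forall_notMem]
    intro x hx
    exact hg (actF_free g x hx)
  rw [this, measure_empty]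

lemma lambda_free : IsFreeAction mu bLambda := by
  intro s hs
  have : {x : XX | bLambda s x = x} = ∅ := by
    rw [Set.eq_empty_iff_forall_notMem]
    intro x hx
    apply hs
    have hz : Multiplicative.toAdd s = 0 := by
      ext n
      have := congrFun (hx : bLambda s x = x) n
      rw [bLambda_apply] at this
      simpa using this
    have : s = Multiplicative.ofAdd 0 := by
      rw [← hz]
      rfl
    simpa using this
  rw [this, measure_empty]

lemma gamma_ergodic : IsErgodicAction mu aGamma := by
  intro A hA hinv
  refine ergodic_core A hA ?_
  rintro s ⟨M, hM⟩
  ext x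
  simp only [Set.mem_preimage]
  obtain ⟨g, hg⟩ := flip_orbit s M hM x
  have hsx : s + x = actF g x := by
    funext n
    rw [hg]
    rfl
  rw [hsx]
  conv_rhs => rw [← hinv g]
  rfl

lemma lambda_ergodic : IsErgodicAction mu bLambda := by
  intro A hA hinv
  refine ergodic_core A hA ?_
  rintro s ⟨M, hM⟩
  have : (fun x : XX => s + x) = ⇑(bLambda (mkFlip M s)) := by
    funext x
    funext n
    rw [bLambda_apply, mkFlip_apply M s hM n]
    rfl
  rw [this, hinv]

/-- Being ICC is not an orbit equivalence invariant: there are orbit equivalent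
countably infinite groups, one ICC and one abelian (hence not ICC). -/
theorem icc_not_orbitEquivalence_invariant :
    ∃ (Γ : Type) (Λ : Type) (gΓ : Group Γ) (gΛ : Group Λ),
      Countable Γ ∧ Infinite Γ ∧ Countable Λ ∧ Infinite Λ ∧
      @IsICCGroup Γ gΓ ∧ @IsAbelianGroup Λ gΛ ∧ ¬ @IsICCGroup Λ gΛ ∧
      @AreOrbitEquivalent Γ Λ gΓ gΛ := by
  refine ⟨Γt, Λt, inferInstance, inferInstance, inferInstance, inferInstance,
    inferInstance, inferInstance, finperm_icc, fun x y => mul_comm x y, ?_, ?_⟩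
  · -- Λt is not ICC
    intro hicc
    set g : Λt := Multiplicative.ofAdd (DFinsupp.single 1 (1 : ZMod 2)) with hgdef
    have hg : g ≠ 1 := by
      intro hcon
      have h0 := congrArg Multiplicative.toAdd hcon
      simp only [hgdef, toAdd_ofAdd, toAdd_one] at h0
      have h1 := DFunLike.congr_fun h0 1
      simp only [DFinsupp.single_eq_same, DFinsupp.zero_apply] at h1
      exact absurd h1 (by decide)
    have hsub : (Set.range fun h : Λt => h * g * h⁻¹) ⊆ {g} := by
      rintro y ⟨h, rfl⟩
      show h * g * h⁻¹ ∈ ({g} : Set Λt)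
      rw [mul_comm h g, mul_inv_cancel_right]
      rfl
    exact (Set.finite_singleton g).not_infinite ((hicc g hg).mono hsub)
  · -- the orbit equivalence
    refine ⟨XX, inferInstance, mu, inferInstance, inferInstance, aGamma, bLambda,
      gamma_pmp, gamma_free, gamma_ergodic, lambda_pmp, lambda_free, lambda_ergodic, ?_⟩
    exact MeasureTheory.ae_of_all mu orbit_eq

end OE
end
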